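/- arXiv:2008.10983 — 6 statements merged into one kernel-verified Lean document; each statement's English description precedes it below -/
import Mathlib

section
/- Let g(s) be a strictly proper real rational function with no poles on the imaginary axis and at least one pole with positive real part. Then the robust instability radius satisfies ρ*(g) ≥ 1/‖g‖_{L∞}; equivalently, every proper stable real rational δ(s) that internally stabilizes g under positive feedback satisfies ‖δ‖_{H∞} ≥ 1/ sup_{ω∈ℝ} |g(iω)|. -/
open Polynomial

/-- Evaluation of the real rational function `n/d` at a complex argument. -/
noncomputable def ratEval (n d : Polynomial ℝ) (s : ℂ) : ℂ :=
  (n.map (algebraMap ℝ ℂ)).eval s / (d.map (algebraMap ℝ ℂ)).eval s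

/-- All complex poles of `δ = b/a` (i.e. roots of `a`) have negative real part. -/
def StableRat (a : Polynomial ℝ) : Prop :=
  ∀ z : ℂ, (a.map (algebraMap ℝ ℂ)).eval z = 0 → z.re < 0

/-- `δ = b/a` is a proper stable real rational function that internally stabilizes
`g = n/d` under positive feedback: every root of `a d − b n` has negative real part. -/
def Stabilizes (b a n d : Polynomial ℝ) : Prop :=
  a ≠ 0 ∧ IsCoprime b a ∧ b.degree ≤ a.degree ∧ StableRat a ∧
    ∀ z : ℂ, ((a * d - b * n).map (algebraMap ℝ ℂ)).eval z = 0 → z.re < 0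

/-- `sup_{ω ∈ ℝ} |g(iω)|` for `g = n/d`. -/
noncomputable def hinfNorm (n d : Polynomial ℝ) : ℝ :=
  ⨆ ω : ℝ, ‖ratEval n d (ω * Complex.I)‖

/-- Number of poles (roots of `d`), with multiplicity, in the open right half plane. -/
noncomputable def orhpCount (d : Polynomial ℝ) : ℕ :=
  Multiset.card ((d.map (algebraMap ℝ ℂ)).roots.filter (fun z => 0 < z.re))

/-- Robust instability radius of `g = n/d`: infimum of `‖δ‖_{H∞}` over `δ ∈ S(g)`
(`+∞` if `S(g)` is empty). -/
noncomputable def RIR (n d : Polynomial ℝ) : ENNReal :=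
  sInf { r : ENNReal | ∃ b a : Polynomial ℝ,
    Stabilizes b a n d ∧ r = ENNReal.ofReal (hinfNorm b a) }

/-- `μ(e)` : infimum of `‖δ‖_{H∞}` over `δ ∈ S(g)` with `δ(0) = e`. -/
noncomputable def Mu (n d : Polynomial ℝ) (e : ℝ) : ENNReal :=
  sInf { r : ENNReal | ∃ b a : Polynomial ℝ,
    Stabilizes b a n d ∧ b.eval 0 / a.eval 0 = e ∧ r = ENNReal.ofReal (hinfNorm b a) }

/-- The characteristic polynomial `chp` achieves `ω_c`-stability: simple root at `iω_c`
(and at `−iω_c` when `ω_c ≠ 0`), all other roots with negative real part. -/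
def OmegaStable (chp : Polynomial ℝ) (ωc : ℝ) : Prop :=
  Polynomial.rootMultiplicity ((ωc : ℂ) * Complex.I) (chp.map (algebraMap ℝ ℂ)) = 1 ∧
  (ωc ≠ 0 → Polynomial.rootMultiplicity (-((ωc : ℂ) * Complex.I)) (chp.map (algebraMap ℝ ℂ)) = 1) ∧
  ∀ z : ℂ, (chp.map (algebraMap ℝ ℂ)).eval z = 0 →
    z ≠ (ωc : ℂ) * Complex.I → z ≠ -((ωc : ℂ) * Complex.I) → z.re < 0

section AuxLemmas
open Complex Set Finset

lemma aux_upper (P : Polynomial ℂ) (m : ℕ) (hm : P.natDegree ≤ m) :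
    ∃ c : ℝ, 0 ≤ c ∧ ∀ z : ℂ, 1 ≤ ‖z‖ → ‖P.eval z‖ ≤ c * ‖z‖ ^ m := by
  refine ⟨∑ i ∈ Finset.range (P.natDegree + 1), ‖P.coeff i‖,
    Finset.sum_nonneg fun i _ => norm_nonneg _, fun z hz => ?_⟩
  rw [Polynomial.eval_eq_sum_range]
  calc ‖∑ i ∈ Finset.range (P.natDegree + 1), P.coeff i * z ^ i‖
      ≤ ∑ i ∈ Finset.range (P.natDegree + 1), ‖P.coeff i * z ^ i‖ := norm_sum_le _ _
    _ ≤ ∑ i ∈ Finset.range (P.natDegree + 1), ‖P.coeff i‖ * ‖z‖ ^ m := by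
        refine Finset.sum_le_sum fun i hi => ?_
        rw [norm_mul, norm_pow]
        exact mul_le_mul_of_nonneg_left
          (pow_le_pow_right₀ hz (by simp at hi; omega)) (norm_nonneg _)
    _ = (∑ i ∈ Finset.range (P.natDegree + 1), ‖P.coeff i‖) * ‖z‖ ^ m := by
        rw [Finset.sum_mul]

lemma aux_lower (S : Polynomial ℂ) (hS : S ≠ 0) :
    ∃ R : ℝ, 1 ≤ R ∧ ∀ z : ℂ, R ≤ ‖z‖ →
      ‖S.leadingCoeff‖ / 2 * ‖z‖ ^ S.natDegree ≤ ‖S.eval z‖ := by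
  set m := S.natDegree with hmdef
  have haL : 0 < ‖S.leadingCoeff‖ := norm_pos_iff.mpr (Polynomial.leadingCoeff_ne_zero.mpr hS)
  set aL := ‖S.leadingCoeff‖
  rcases Nat.eq_zero_or_pos m with hm0 | hmpos
  · refine ⟨1, le_refl _, fun z hz => ?_⟩
    have : S = Polynomial.C (S.coeff 0) := Polynomial.eq_C_of_natDegree_eq_zero hm0
    rw [hm0, pow_zero, mul_one]
    have hc : S.leadingCoeff = S.coeff 0 := by
      rw [Polynomial.leadingCoeff, ← hmdef, hm0]
    conv_rhs => rw [this]
    rw [Polynomial.eval_C]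
    rw [← hc]
    linarith
  · obtain ⟨c, hc0, hup⟩ := aux_upper S.eraseLead (m - 1)
      (le_trans (Polynomial.eraseLead_natDegree_le S) (by omega))
    refine ⟨max 1 (2 * c / aL + 1), le_max_left _ _, fun z hz => ?_⟩
    have hz1 : 1 ≤ ‖z‖ := le_trans (le_max_left _ _) hz
    have hz2 : 2 * c / aL + 1 ≤ ‖z‖ := le_trans (le_max_right _ _) hz
    have hzc : c ≤ aL / 2 * ‖z‖ := by
      rw [div_mul_eq_mul_div, le_div_iff₀ (by norm_num : (0:ℝ) < 2)] at *
      have : 2 * c / aL ≤ ‖z‖ - 1 := by linarith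
      have := (div_le_iff₀ haL).mp this
      nlinarith
    have hid : S.eval z = S.eraseLead.eval z + S.leadingCoeff * z ^ m := by
      conv_lhs => rw [← Polynomial.eraseLead_add_C_mul_X_pow S]
      rw [Polynomial.eval_add, Polynomial.eval_mul, Polynomial.eval_C, Polynomial.eval_pow,
        Polynomial.eval_X, ← hmdef]
    have hT := hup z hz1
    have hnorm : aL * ‖z‖ ^ m - ‖S.eraseLead.eval z‖ ≤ ‖S.eval z‖ := by
      have h1 : ‖S.leadingCoeff * z ^ m‖ - ‖S.eraseLead.eval z‖ ≤ ‖S.eval z‖ := by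
        have := norm_sub_norm_le (S.leadingCoeff * z ^ m) (-(S.eraseLead.eval z))
        rw [sub_neg_eq_add, norm_neg] at this
        calc ‖S.leadingCoeff * z ^ m‖ - ‖S.eraseLead.eval z‖
            ≤ ‖S.leadingCoeff * z ^ m + S.eraseLead.eval z‖ := this
          _ = ‖S.eval z‖ := by rw [hid, add_comm]
      rw [norm_mul, norm_pow] at h1
      exact h1
    have hpow : ‖z‖ ^ m = ‖z‖ ^ (m - 1) * ‖z‖ := by
      conv_lhs => rw [show m = (m - 1) + 1 by omega]
      rw [pow_succ]
    have hTle : ‖S.eraseLead.eval z‖ ≤ aL / 2 * ‖z‖ ^ m := by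
      calc ‖S.eraseLead.eval z‖ ≤ c * ‖z‖ ^ (m - 1) := hT
        _ ≤ (aL / 2 * ‖z‖) * ‖z‖ ^ (m - 1) :=
            mul_le_mul_of_nonneg_right hzc (pow_nonneg (by linarith) _)
        _ = aL / 2 * ‖z‖ ^ m := by rw [hpow]; ring
    linarith

lemma aux_ratio (Q S : Polynomial ℂ) (hdeg : Q.degree < S.degree) {ε : ℝ} (hε : 0 < ε) :
    ∃ R : ℝ, 1 ≤ R ∧ ∀ z : ℂ, R ≤ ‖z‖ → ‖Q.eval z‖ ≤ ε * ‖S.eval z‖ := by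
  have hS0 : S ≠ 0 := by
    intro h; rw [h, Polynomial.degree_zero] at hdeg; exact (not_lt_bot hdeg)
  by_cases hQ0 : Q = 0
  · exact ⟨1, le_refl _, fun z _ => by
      simp [hQ0]; positivity⟩
  · have hnat : Q.natDegree < S.natDegree := Polynomial.natDegree_lt_natDegree hQ0 hdeg
    set m := S.natDegree
    obtain ⟨c, hc0, hup⟩ := aux_upper Q (m - 1) (by omega)
    obtain ⟨R₁, hR₁, hlow⟩ := aux_lower S hS0
    have haL : 0 < ‖S.leadingCoeff‖ := norm_pos_iff.mpr (Polynomial.leadingCoeff_ne_zero.mpr hS0)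
    set aL := ‖S.leadingCoeff‖
    refine ⟨max R₁ (2 * c / (ε * aL) + 1), le_trans hR₁ (le_max_left _ _), fun z hz => ?_⟩
    have hz1 : R₁ ≤ ‖z‖ := le_trans (le_max_left _ _) hz
    have hz11 : 1 ≤ ‖z‖ := le_trans hR₁ hz1
    have hz2 : 2 * c / (ε * aL) + 1 ≤ ‖z‖ := le_trans (le_max_right _ _) hz
    have hzc : c ≤ ε * (aL / 2) * ‖z‖ := by
      have h1 : 2 * c / (ε * aL) ≤ ‖z‖ - 1 := by linarith
      have := (div_le_iff₀ (by positivity : (0:ℝ) < ε * aL)).mp h1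
      nlinarith
    have hpow : ‖z‖ ^ m = ‖z‖ ^ (m - 1) * ‖z‖ := by
      conv_lhs => rw [show m = (m - 1) + 1 by omega]
      rw [pow_succ]
    calc ‖Q.eval z‖ ≤ c * ‖z‖ ^ (m - 1) := hup z hz11
      _ ≤ (ε * (aL / 2) * ‖z‖) * ‖z‖ ^ (m - 1) :=
          mul_le_mul_of_nonneg_right hzc (pow_nonneg (by linarith) _)
      _ = ε * (aL / 2 * ‖z‖ ^ m) := by rw [hpow]; ring
      _ ≤ ε * ‖S.eval z‖ := mul_le_mul_of_nonneg_left (hlow z hz1) (le_of_lt hε)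

lemma norm_omega_I (ω : ℝ) : ‖(ω : ℂ) * Complex.I‖ = |ω| := by
  simp

lemma aux_bdd (p q : Polynomial ℝ) (hdeg : p.degree ≤ q.degree)
    (hq : ∀ ω : ℝ, (q.map (algebraMap ℝ ℂ)).eval ((ω : ℂ) * Complex.I) ≠ 0) :
    BddAbove (Set.range fun ω : ℝ => ‖ratEval p q ((ω : ℂ) * Complex.I)‖) := by
  set P := p.map (algebraMap ℝ ℂ) with hP
  set Q := q.map (algebraMap ℝ ℂ) with hQ
  have hinj : Function.Injective (algebraMap ℝ ℂ) := (algebraMap ℝ ℂ).injective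
  have hq0 : q ≠ 0 := by
    intro h
    exact hq 0 (by simp [hQ, h])
  have hQ0 : Q ≠ 0 := by
    rw [hQ, Ne, Polynomial.map_eq_zero_iff hinj]
    exact hq0
  have habs : ∀ ω : ℝ, ‖ratEval p q ((ω : ℂ) * Complex.I)‖
      = ‖P.eval ((ω : ℂ) * Complex.I)‖ / ‖Q.eval ((ω : ℂ) * Complex.I)‖ := by
    intro ω
    rw [ratEval, norm_div]
  have hm : P.natDegree ≤ Q.natDegree := by
    rw [hP, hQ, Polynomial.natDegree_map_eq_of_injective hinj,
      Polynomial.natDegree_map_eq_of_injective hinj]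
    exact Polynomial.natDegree_le_natDegree hdeg
  obtain ⟨c, hc0, hup⟩ := aux_upper P Q.natDegree hm
  obtain ⟨R₁, hR₁, hlow⟩ := aux_lower Q hQ0
  have haL : 0 < ‖Q.leadingCoeff‖ := norm_pos_iff.mpr (Polynomial.leadingCoeff_ne_zero.mpr hQ0)
  -- compact part
  have hcont : ContinuousOn (fun ω : ℝ => ‖ratEval p q ((ω : ℂ) * Complex.I)‖)
      (Set.Icc (-R₁) R₁) := by
    have h1 : Continuous fun ω : ℝ => (ω : ℂ) * Complex.I :=
      (Complex.continuous_ofReal).mul continuous_const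
    have h2 : Continuous fun ω : ℝ => ‖P.eval ((ω : ℂ) * Complex.I)‖ :=
      (P.continuous.comp h1).norm
    have h3 : Continuous fun ω : ℝ => ‖Q.eval ((ω : ℂ) * Complex.I)‖ :=
      (Q.continuous.comp h1).norm
    refine ContinuousOn.congr (f := fun ω : ℝ =>
      ‖P.eval ((ω : ℂ) * Complex.I)‖ / ‖Q.eval ((ω : ℂ) * Complex.I)‖) ?_ fun ω _ => habs ω
    exact (h2.continuousOn).div (h3.continuousOn)
      fun ω _ => norm_ne_zero_iff.mpr (hq ω)
  obtain ⟨C₂, hC₂⟩ := isCompact_Icc.exists_bound_of_continuousOn hcont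
  refine ⟨max (2 * c / ‖Q.leadingCoeff‖) C₂, ?_⟩
  rintro x ⟨ω, rfl⟩
  by_cases hcase : |ω| ≤ R₁
  · refine le_trans ?_ (le_max_right _ _)
    have := hC₂ ω (abs_le.mp hcase |> fun h => ⟨h.1, h.2⟩)
    calc ‖ratEval p q ((ω : ℂ) * Complex.I)‖
        ≤ |(‖ratEval p q ((ω : ℂ) * Complex.I)‖)| := le_abs_self _
      _ ≤ C₂ := by rw [← Real.norm_eq_abs]; exact this
  · push_neg at hcase
    refine le_trans ?_ (le_max_left _ _)
    set z := (ω : ℂ) * Complex.I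
    have hz : R₁ ≤ ‖z‖ := by rw [norm_omega_I]; exact hcase.le
    have hz1 : 1 ≤ ‖z‖ := le_trans hR₁ hz
    have h1 := hup z hz1
    have h2 := hlow z hz
    have hpow : (0:ℝ) < ‖z‖ ^ Q.natDegree := pow_pos (by linarith) _
    show ‖ratEval p q ((ω : ℂ) * Complex.I)‖ ≤ _
    rw [habs]
    calc ‖P.eval z‖ / ‖Q.eval z‖
        ≤ (c * ‖z‖ ^ Q.natDegree) / (‖Q.leadingCoeff‖ / 2 * ‖z‖ ^ Q.natDegree) :=
          div_le_div₀ (by positivity) h1 (by positivity) h2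
      _ = 2 * c / ‖Q.leadingCoeff‖ := by
          rw [div_eq_div_iff (by positivity) (by positivity)]
          ring

end AuxLemmas

theorem stmt0 (n d : Polynomial ℝ) (hd : d ≠ 0) (hcop : IsCoprime n d)
    (hsp : n.degree < d.degree)
    (hnoimag : ∀ ω : ℝ, (d.map (algebraMap ℝ ℂ)).eval ((ω : ℂ) * Complex.I) ≠ 0)
    (hunst : ∃ z : ℂ, (d.map (algebraMap ℝ ℂ)).eval z = 0 ∧ 0 < z.re)
    (b a : Polynomial ℝ) (hstab : Stabilizes b a n d) :
    1 / hinfNorm n d ≤ hinfNorm b a := by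
  obtain ⟨ha0, hcopba, hdegba, hstable, hhur⟩ := hstab
  by_contra hlt
  push_neg at hlt
  set Ma := hinfNorm b a with hMa
  set Mg := hinfNorm n d with hMg
  have hMa0 : 0 ≤ Ma := Real.iSup_nonneg fun ω => norm_nonneg _
  have hMg0 : 0 ≤ Mg := Real.iSup_nonneg fun ω => norm_nonneg _
  have hMgpos : 0 < Mg := by
    rcases eq_or_lt_of_le hMg0 with h | h
    · rw [← h] at hlt
      simp only [div_zero] at hlt
      linarith
    · exact h
  have hkey : Ma * Mg ≤ 1 := le_of_lt ((lt_div_iff₀ hMgpos).mp hlt)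
  -- complex polynomials
  set A := a.map (algebraMap ℝ ℂ) with hA
  set B := b.map (algebraMap ℝ ℂ) with hB
  set N := n.map (algebraMap ℝ ℂ) with hN
  set D := d.map (algebraMap ℝ ℂ) with hD
  set S := (a * d - b * n).map (algebraMap ℝ ℂ) with hS
  have hSdef : S = A * D - B * N := by
    rw [hS, hA, hB, hN, hD, Polynomial.map_sub, Polynomial.map_mul, Polynomial.map_mul]
  obtain ⟨z₀, hz₀d, hz₀re⟩ := hunst
  have hSz₀ : S.eval z₀ = -((B * N).eval z₀) := by
    rw [hSdef, Polynomial.eval_sub, Polynomial.eval_mul, Polynomial.eval_mul]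
    rw [show D.eval z₀ = 0 from hz₀d]
    ring
  have hBN₀ : (B * N).eval z₀ ≠ 0 := by
    intro h
    have := hhur z₀ (by rw [hSz₀, h, neg_zero])
    linarith
  have hSz₀ne : S.eval z₀ ≠ 0 := by rw [hSz₀]; exact neg_ne_zero.mpr hBN₀
  have hinj : Function.Injective (algebraMap ℝ ℂ) := (algebraMap ℝ ℂ).injective
  -- nonvanishing on imaginary axis
  have hAax : ∀ ω : ℝ, A.eval ((ω : ℂ) * Complex.I) ≠ 0 := by
    intro ω h
    have := hstable _ h
    simp [Complex.mul_re] at this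
  have hSax : ∀ z : ℂ, 0 ≤ z.re → S.eval z ≠ 0 := by
    intro z hz h
    have := hhur z h
    linarith
  -- nonzero polys
  have hb0 : b ≠ 0 := by
    rintro rfl
    simp [hB] at hBN₀
  have hn0 : n ≠ 0 := by
    rintro rfl
    simp [hN] at hBN₀
  -- degrees
  have hdegQS : (B * N).degree < S.degree := by
    have hbn : (b * n).degree < (a * d).degree := by
      rw [Polynomial.degree_mul, Polynomial.degree_mul]
      rw [Polynomial.degree_eq_natDegree hb0, Polynomial.degree_eq_natDegree hn0,
        Polynomial.degree_eq_natDegree ha0, Polynomial.degree_eq_natDegree hd]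
      have h1 : b.natDegree ≤ a.natDegree := Polynomial.natDegree_le_natDegree hdegba
      have h2 : n.natDegree < d.natDegree := Polynomial.natDegree_lt_natDegree hn0 hsp
      rw [← Nat.cast_add, ← Nat.cast_add, Nat.cast_lt]
      omega
    have hsub : (a * d - b * n).degree = (a * d).degree :=
      Polynomial.degree_sub_eq_left_of_degree_lt hbn
    have e1 : (B * N).degree = (b * n).degree := by
      rw [hB, hN, ← Polynomial.map_mul, Polynomial.degree_map_eq_of_injective hinj]
    have e2 : S.degree = (a * d - b * n).degree := by
      rw [hS, Polynomial.degree_map_eq_of_injective hinj]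
    rw [e1, e2, hsub]
    exact hbn
  -- pointwise sup bounds
  have hbdd1 : BddAbove (Set.range fun ω : ℝ => ‖ratEval b a ((ω : ℂ) * Complex.I)‖) :=
    aux_bdd b a hdegba hAax
  have hbdd2 : BddAbove (Set.range fun ω : ℝ => ‖ratEval n d ((ω : ℂ) * Complex.I)‖) :=
    aux_bdd n d hsp.le hnoimag
  have hδ : ∀ ω : ℝ, ‖ratEval b a ((ω : ℂ) * Complex.I)‖ ≤ Ma :=
    fun ω => le_ciSup hbdd1 ω
  have hg : ∀ ω : ℝ, ‖ratEval n d ((ω : ℂ) * Complex.I)‖ ≤ Mg :=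
    fun ω => le_ciSup hbdd2 ω
  -- axis bound on |BN| vs |AD|
  have haxis : ∀ ω : ℝ, ‖(B * N).eval ((ω : ℂ) * Complex.I)‖ ≤ ‖(A * D).eval ((ω : ℂ) * Complex.I)‖ := by
    intro ω
    set z := (ω : ℂ) * Complex.I
    have hAz : A.eval z ≠ 0 := hAax ω
    have hDz : D.eval z ≠ 0 := hnoimag ω
    have e1 : ‖B.eval z‖ = ‖ratEval b a z‖ * ‖A.eval z‖ := by
      rw [ratEval, norm_div]
      rw [show ‖eval z (b.map (algebraMap ℝ ℂ))‖ = ‖B.eval z‖ from rfl,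
        show ‖eval z (a.map (algebraMap ℝ ℂ))‖ = ‖A.eval z‖ from rfl]
      rw [div_mul_cancel₀]
      exact norm_ne_zero_iff.mpr hAz
    have e2 : ‖N.eval z‖ = ‖ratEval n d z‖ * ‖D.eval z‖ := by
      rw [ratEval, norm_div]
      rw [show ‖eval z (n.map (algebraMap ℝ ℂ))‖ = ‖N.eval z‖ from rfl,
        show ‖eval z (d.map (algebraMap ℝ ℂ))‖ = ‖D.eval z‖ from rfl]
      rw [div_mul_cancel₀]
      exact norm_ne_zero_iff.mpr hDz
    rw [Polynomial.eval_mul, Polynomial.eval_mul, norm_mul, norm_mul, e1, e2]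
    have h1 := hδ ω
    have h2 := hg ω
    have hA0 : (0:ℝ) ≤ ‖A.eval z‖ := norm_nonneg _
    have hD0 : (0:ℝ) ≤ ‖D.eval z‖ := norm_nonneg _
    have hδ0 : (0:ℝ) ≤ ‖ratEval b a z‖ := norm_nonneg _
    have hg0 : (0:ℝ) ≤ ‖ratEval n d z‖ := norm_nonneg _
    calc ‖ratEval b a z‖ * ‖A.eval z‖ * (‖ratEval n d z‖ * ‖D.eval z‖)
        = (‖ratEval b a z‖ * ‖ratEval n d z‖) * (‖A.eval z‖ * ‖D.eval z‖) := by ring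
      _ ≤ (Ma * Mg) * (‖A.eval z‖ * ‖D.eval z‖) := by
          apply mul_le_mul_of_nonneg_right (mul_le_mul h1 h2 hg0 hMa0) (by positivity)
      _ ≤ 1 * (‖A.eval z‖ * ‖D.eval z‖) := mul_le_mul_of_nonneg_right hkey (by positivity)
      _ = ‖A.eval z‖ * ‖D.eval z‖ := one_mul _
  -- setup half-disk
  obtain ⟨R₀, hR₀1, harc⟩ := aux_ratio (B * N) S hdegQS (by norm_num : (0:ℝ) < 1/2)
  set R := max R₀ (‖z₀‖ + 1) with hRdef
  set U := {z : ℂ | 0 < z.re} ∩ Metric.ball (0:ℂ) R with hU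
  set ψ := fun z : ℂ => (B * N).eval z / S.eval z with hψ
  set f := fun z : ℂ => Complex.exp (-(ψ z)) with hf
  have hUopen : IsOpen U := (isOpen_lt continuous_const Complex.continuous_re).inter Metric.isOpen_ball
  have hz₀U : z₀ ∈ U := by
    refine ⟨hz₀re, ?_⟩
    rw [Metric.mem_ball, dist_zero_right]
    calc ‖z₀‖ < ‖z₀‖ + 1 := by linarith
      _ ≤ R := le_max_right _ _
  have hUb : Bornology.IsBounded U := Metric.isBounded_ball.subset Set.inter_subset_right
  have hclos : closure U ⊆ {z : ℂ | 0 ≤ z.re} ∩ Metric.closedBall (0:ℂ) R := by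
    apply closure_minimal
    · exact Set.inter_subset_inter (Set.setOf_subset_setOf.mpr fun z => le_of_lt)
        Metric.ball_subset_closedBall
    · exact (isClosed_le continuous_const Complex.continuous_re).inter Metric.isClosed_closedBall
  have hSne : ∀ z ∈ closure U, S.eval z ≠ 0 := fun z hz => hSax z (hclos hz).1
  have hdiff : DiffContOnCl ℂ f U := by
    apply DifferentiableOn.diffContOnCl
    intro z hz
    apply DifferentiableAt.differentiableWithinAt
    apply DifferentiableAt.cexp
    apply DifferentiableAt.neg
    exact ((B * N).differentiable.differentiableAt).div (S.differentiable.differentiableAt)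
      (hSne z hz)
  have hfr : ∀ z ∈ frontier U, ‖f z‖ ≤ Real.exp (1/2) := by
    intro z hz
    have hzcl : z ∈ closure U := frontier_subset_closure hz
    have h0re : 0 ≤ z.re := (hclos hzcl).1
    have hzR : ‖z‖ ≤ R := by
      have := (hclos hzcl).2
      rwa [Metric.mem_closedBall, dist_zero_right] at this
    have hznU : z ∉ U := by
      rw [hUopen.frontier_eq] at hz
      exact hz.2
    have hSz : S.eval z ≠ 0 := hSne z hzcl
    have key : -(1/2 : ℝ) ≤ (ψ z).re := by
      by_cases hcase : R₀ ≤ ‖z‖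
      · have h := harc z hcase
        have habs : ‖ψ z‖ ≤ 1/2 := by
          rw [hψ]
          simp only [norm_div]
          rw [div_le_iff₀ (by
            have : S.eval z ≠ 0 := hSz
            have := norm_pos_iff.mpr this
            exact this)]
          calc ‖(B * N).eval z‖ = ‖(B * N).eval z‖ := rfl
            _ ≤ 1/2 * ‖S.eval z‖ := h
            _ = 1/2 * ‖S.eval z‖ := rfl
        have h1 := Complex.abs_re_le_norm (ψ z)
        have h2 := neg_abs_le (ψ z).re
        linarith
      · push_neg at hcase
        have hre0 : z.re = 0 := by
          by_contra hne
          have hpos : 0 < z.re := lt_of_le_of_ne h0re (Ne.symm hne)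
          apply hznU
          refine ⟨hpos, ?_⟩
          rw [Metric.mem_ball, dist_zero_right]
          calc ‖z‖ < R₀ := hcase
            _ ≤ R := le_max_left _ _
        set ω := z.im
        have hzeq : (ω : ℂ) * Complex.I = z := by
          apply Complex.ext <;> simp [hre0, ω]
        have hax : ‖(B * N).eval z‖ ≤ ‖(A * D).eval z‖ := by
          rw [← hzeq]; exact haxis ω
        have hADS : (A * D).eval z = S.eval z + (B * N).eval z := by
          rw [hSdef]; simp [Polynomial.eval_sub]
        have h1ψ : 1 + ψ z = (A * D).eval z / S.eval z := by
          rw [hψ, hADS]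
          field_simp
        have habsle : ‖ψ z‖ ≤ ‖1 + ψ z‖ := by
          rw [h1ψ, hψ]
          simp only [norm_div]
          rw [div_le_div_iff_of_pos_right (norm_pos_iff.mpr hSz)]
          exact hax
        have h2 : Complex.normSq (ψ z) ≤ Complex.normSq (1 + ψ z) := by
          rw [← Complex.sq_norm, ← Complex.sq_norm]
          exact pow_le_pow_left₀ (norm_nonneg _) habsle 2
        have h3 : Complex.normSq (1 + ψ z) = 1 + 2 * (ψ z).re + Complex.normSq (ψ z) := by
          rw [Complex.normSq_add]
          simp
          ring
        linarith
    have hnf : ‖f z‖ = Real.exp (-(ψ z).re) := by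
      rw [hf]
      simp [Complex.norm_exp]
    rw [hnf]
    apply Real.exp_le_exp.mpr
    linarith
  have hmax := Complex.norm_le_of_forall_mem_frontier_norm_le hUb hdiff hfr (subset_closure hz₀U)
  have hψz₀ : ψ z₀ = -1 := by
    rw [hψ]
    simp only []
    rw [hSz₀, div_neg, div_self hBN₀]
  have hfz₀ : ‖f z₀‖ = Real.exp 1 := by
    rw [hf]
    simp [hψz₀, Complex.norm_exp]
  rw [hfz₀] at hmax
  have := Real.exp_le_exp.mp hmax
  linarith
end

section
/- Let g(s) be a strictly proper real rational function with no poles on the imaginary axis, at least one pole with positive real part, and an odd total number (counted with multiplicity) of poles with positive real part. Then ρ*(g) ≥ 1/|g(0)|; equivalently, every proper stable real rational δ(s) that internally stabilizes g under positive feedback satisfies ‖δ‖_{H∞} ≥ 1/|g(0)|. -/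
open Polynomial

lemma prod_pos_of_conj : ∀ (M : Multiset ℂ), M.map (starRingEnd ℂ) = M →
    (∀ z ∈ M, 0 < z.re) → ∃ x : ℝ, 0 < x ∧ M.prod = (x : ℂ) := by
  intro M
  induction M using Multiset.strongInductionOn with
  | _ M ih =>
    intro hc hre
    rcases Multiset.empty_or_exists_mem M with h0 | ⟨a, ha⟩
    · exact ⟨1, one_pos, by simp [h0]⟩
    by_cases him : (starRingEnd ℂ) a = a
    · obtain ⟨M', rfl⟩ := Multiset.exists_cons_of_mem ha
      have hc' : M'.map (starRingEnd ℂ) = M' := by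
        rw [Multiset.map_cons, him, Multiset.cons_inj_right] at hc
        exact hc
      obtain ⟨x, hx, hxp⟩ := ih M' (Multiset.lt_cons_self M' a) hc'
        (fun z hz => hre z (Multiset.mem_cons_of_mem hz))
      have haim : a.im = 0 := by
        have h2 := congrArg Complex.im him
        simp [Complex.conj_im] at h2
        linarith
      refine ⟨a.re * x, mul_pos (hre a (Multiset.mem_cons_self a M')) hx, ?_⟩
      rw [Multiset.prod_cons, hxp]
      have : a = (a.re : ℂ) := Complex.ext (by simp) (by simp [haim])
      rw [this]; simp [mul_comm]
    · have hamem : (starRingEnd ℂ) a ∈ M := by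
        have : Multiset.count ((starRingEnd ℂ) a) M = Multiset.count a M := by
          conv_lhs => rw [← hc]
          exact Multiset.count_map_eq_count' _ _ (starRingEnd ℂ).injective _
        rw [← Multiset.count_pos, this, Multiset.count_pos]
        exact ha
      have hamem' : (starRingEnd ℂ) a ∈ M.erase a :=
        Multiset.mem_erase_of_ne him |>.mpr hamem
      set M₂ := (M.erase a).erase ((starRingEnd ℂ) a) with hM₂
      have hrepr : M = a ::ₘ (starRingEnd ℂ) a ::ₘ M₂ := by
        rw [hM₂, Multiset.cons_erase hamem', Multiset.cons_erase ha]
      have hc2 : M₂.map (starRingEnd ℂ) = M₂ := by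
        rw [hM₂, Multiset.map_erase _ (starRingEnd ℂ).injective,
          Multiset.map_erase _ (starRingEnd ℂ).injective, hc, Complex.conj_conj]
        exact Multiset.erase_comm _ _ _
      have hlt : M₂ < M := by
        rw [hrepr]
        exact lt_trans (Multiset.lt_cons_self _ _) (Multiset.lt_cons_self _ _)
      have hre2 : ∀ z ∈ M₂, 0 < z.re := by
        intro z hz
        exact hre z (by rw [hrepr]; exact Multiset.mem_cons_of_mem (Multiset.mem_cons_of_mem hz))
      obtain ⟨x, hx, hxp⟩ := ih M₂ hlt hc2 hre2
      have ha0 : a ≠ 0 := by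
        intro h; have := hre a ha; rw [h] at this; simp at this
      refine ⟨Complex.normSq a * x, mul_pos (Complex.normSq_pos.mpr ha0) hx, ?_⟩
      rw [hrepr, Multiset.prod_cons, Multiset.prod_cons, hxp, ← mul_assoc,
        Complex.mul_conj]
      push_cast; ring


lemma map_conj_self (p : Polynomial ℝ) :
    (p.map (algebraMap ℝ ℂ)).map (starRingEnd ℂ) = p.map (algebraMap ℝ ℂ) := by
  rw [Polynomial.map_map]
  congr 1
  exact RingHom.ext fun x => Complex.conj_ofReal x


lemma roots_conj (p : Polynomial ℝ) :
    ((p.map (algebraMap ℝ ℂ)).roots).map (starRingEnd ℂ) = (p.map (algebraMap ℝ ℂ)).roots := by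
  conv_rhs => rw [← map_conj_self p]
  exact ((IsAlgClosed.splits _).roots_map _).symm


lemma eval_map_zero (p : Polynomial ℝ) :
    (p.map (algebraMap ℝ ℂ)).eval 0 = ((p.eval 0 : ℝ) : ℂ) := by
  rw [Polynomial.eval_map, Polynomial.eval₂_at_zero, Polynomial.coeff_zero_eq_eval_zero]
  rfl


lemma sign_eval_zero (p : Polynomial ℝ) (hp : p ≠ 0)
    (him : ∀ z : ℂ, (p.map (algebraMap ℝ ℂ)).eval z = 0 → z.re ≠ 0) :
    ∃ x : ℝ, 0 < x ∧ p.eval 0 = (-1) ^ (orhpCount p) * (x * p.leadingCoeff) := by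
  classical
  set P := p.map (algebraMap ℝ ℂ) with hP
  have hP0 : P ≠ 0 := by
    simpa [hP, Polynomial.map_eq_zero_iff (algebraMap ℝ ℂ).injective] using hp
  have hconjR : P.roots.map (starRingEnd ℂ) = P.roots := roots_conj p
  set rp := P.roots.filter (fun z => 0 < z.re) with hrp
  set rm := P.roots.filter (fun z => ¬ 0 < z.re) with hrm
  have hsplit : rp + rm = P.roots := Multiset.filter_add_not _ _
  have hfilt : ∀ (q : ℂ → Prop) [DecidablePred q], (∀ z : ℂ, q ((starRingEnd ℂ) z) ↔ q z) →
      (P.roots.filter q).map (starRingEnd ℂ) = P.roots.filter q := by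
    intro q _ hq
    have h1 : (P.roots.map (starRingEnd ℂ)).filter q
        = (P.roots.filter q).map (starRingEnd ℂ) := by
      rw [Multiset.filter_map]
      exact congrArg _ (Multiset.filter_congr (fun x _ => by simpa using hq x))
    rw [← h1, hconjR]
  have hconjp : rp.map (starRingEnd ℂ) = rp :=
    hfilt _ (fun z => by simp [Complex.conj_re])
  have hconjm : rm.map (starRingEnd ℂ) = rm :=
    hfilt _ (fun z => by simp [Complex.conj_re])
  obtain ⟨xp, hxp, hxpe⟩ := prod_pos_of_conj rp hconjp
    (fun z hz => (Multiset.mem_filter.mp hz).2)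
  obtain ⟨xm, hxm, hxme⟩ := prod_pos_of_conj (rm.map (fun z => -z))
    (by rw [Multiset.map_map]
        have hcn : ((starRingEnd ℂ) ∘ fun z : ℂ => -z) = (fun z : ℂ => -z) ∘ (starRingEnd ℂ) := by
          funext z; simp
        rw [hcn, ← Multiset.map_map, hconjm])
    (by intro z hz
        obtain ⟨w, hw, rfl⟩ := Multiset.mem_map.mp hz
        have hw1 := (Multiset.mem_filter.mp hw).2
        have hw2 : w ∈ P.roots := (Multiset.mem_filter.mp hw).1
        have hne := him w ((Polynomial.mem_roots hP0).mp hw2)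
        simp only [Complex.neg_re]
        rcases lt_or_gt_of_ne hne with h | h
        · linarith
        · exact absurd h hw1)
  -- factorization
  have hfact := (IsAlgClosed.splits P).eq_prod_roots
  have heval : P.eval 0 = P.leadingCoeff * (P.roots.map (fun r => -r)).prod := by
    conv_lhs => rw [hfact]
    rw [Polynomial.eval_mul, Polynomial.eval_C, Polynomial.eval_multiset_prod,
      Multiset.map_map]
    refine congrArg _ (congrArg Multiset.prod (Multiset.map_congr rfl (fun r _ => ?_)))
    show Polynomial.eval 0 (X - C r) = -r
    simp
  have hprodsplit : (P.roots.map (fun r => -r)).prod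
      = (rp.map (fun r => -r)).prod * (rm.map (fun r => -r)).prod := by
    rw [← hsplit, Multiset.map_add, Multiset.prod_add]
  have hrpneg : (rp.map (fun r => -r)).prod = (-1) ^ (orhpCount p) * (xp : ℂ) := by
    rw [Multiset.prod_map_neg, hxpe]
    rfl
  have hcard : Multiset.card rp = orhpCount p := rfl
  have hlead : P.leadingCoeff = ((p.leadingCoeff : ℝ) : ℂ) :=
    Polynomial.leadingCoeff_map_of_injective (algebraMap ℝ ℂ).injective p
  have hfin : ((p.eval 0 : ℝ) : ℂ) = (((-1) ^ (orhpCount p) * (xp * xm * p.leadingCoeff) : ℝ) : ℂ) := by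
    rw [← eval_map_zero, heval, hprodsplit, hrpneg, hxme, hlead]
    push_cast
    ring
  exact ⟨xp * xm, mul_pos hxp hxm, by exact_mod_cast hfin⟩


lemma poly_abs_le (P : Polynomial ℂ) (N : ℕ) (hN : P.natDegree ≤ N) (z : ℂ)
    (hz : 1 ≤ ‖z‖) :
    ‖P.eval z‖
      ≤ (∑ k ∈ Finset.range (P.natDegree + 1), ‖P.coeff k‖) * ‖z‖ ^ N := by
  rw [Polynomial.eval_eq_sum_range]
  refine le_trans (norm_sum_le _ _) ?_
  rw [Finset.sum_mul]
  refine Finset.sum_le_sum ?_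
  intro i hi
  rw [norm_mul, norm_pow]
  refine mul_le_mul_of_nonneg_left ?_ (norm_nonneg _)
  exact pow_le_pow_right₀ hz (le_trans (Nat.lt_succ_iff.mp (Finset.mem_range.mp hi)) hN)


lemma poly_abs_lower (Q : Polynomial ℂ) (hQ : Q ≠ 0) :
    ∃ R c : ℝ, 0 < c ∧ 1 ≤ R ∧ ∀ z : ℂ, R ≤ ‖z‖ →
      c * ‖z‖ ^ Q.natDegree ≤ ‖Q.eval z‖ := by
  set N := Q.natDegree with hN
  set L := ‖Q.leadingCoeff‖ with hL
  have hL0 : 0 < L := by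
    rw [hL]
    exact norm_pos_iff.mpr (Polynomial.leadingCoeff_ne_zero.mpr hQ)
  set E := Q.eraseLead with hE
  by_cases hE0 : E = 0
  · refine ⟨1, L, hL0, le_refl 1, ?_⟩
    intro z hz
    have : Q = C Q.leadingCoeff * X ^ N := by
      conv_lhs => rw [← Polynomial.eraseLead_add_C_mul_X_pow Q]
      rw [← hE, hE0]; ring
    rw [this]
    simp [map_mul, map_pow, hL]
  · -- E ≠ 0, so N ≥ 1 and natDegree E < N
    have hsupp : 2 ≤ Q.support.card := by
      have h1 := Polynomial.card_support_eraseLead_add_one (f := Q) hQ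
      rw [← hE] at h1
      have h2 : 1 ≤ E.support.card := by
        rcases Nat.eq_zero_or_pos E.support.card with h | h
        · exact absurd (Polynomial.card_support_eq_zero.mp h) hE0
        · exact h
      omega
    have hElt : E.natDegree < N := Polynomial.eraseLead_natDegree_lt hsupp
    have hN1 : 1 ≤ N := lt_of_le_of_lt (Nat.zero_le _) hElt
    set S := ∑ k ∈ Finset.range (E.natDegree + 1), ‖E.coeff k‖ with hS
    have hS0 : 0 ≤ S := Finset.sum_nonneg fun _ _ => norm_nonneg _
    refine ⟨max 1 (2 * S / L + 1), L / 2, by positivity, le_max_left _ _, ?_⟩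
    intro z hz
    have hz1 : 1 ≤ ‖z‖ := le_trans (le_max_left _ _) hz
    have hz2 : 2 * S / L + 1 ≤ ‖z‖ := le_trans (le_max_right _ _) hz
    have hEbound : ‖E.eval z‖ ≤ S * ‖z‖ ^ (N - 1) :=
      poly_abs_le E (N - 1) (Nat.le_sub_one_of_lt hElt) z hz1
    have hQz : Q.eval z = Q.leadingCoeff * z ^ N + E.eval z := by
      conv_lhs => rw [← Polynomial.eraseLead_add_C_mul_X_pow Q]
      rw [Polynomial.eval_add, Polynomial.eval_mul, Polynomial.eval_C, Polynomial.eval_pow,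
        Polynomial.eval_X, ← hE, ← hN]
      ring
    have h1 : ‖Q.eval z‖ ≥ L * ‖z‖ ^ N - S * ‖z‖ ^ (N - 1) := by
      rw [hQz]
      have htri := norm_sub_norm_le (Q.leadingCoeff * z ^ N) (-(E.eval z))
      simp only [sub_neg_eq_add, norm_neg] at htri
      rw [norm_mul, norm_pow] at htri
      linarith [htri, hEbound]
    have hpow : ‖z‖ ^ N = ‖z‖ ^ (N - 1) * ‖z‖ := by
      conv_lhs => rw [← Nat.succ_pred_eq_of_pos hN1]
      rw [pow_succ, Nat.pred_eq_sub_one]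
    have h2 : S * ‖z‖ ^ (N - 1) ≤ (L / 2) * ‖z‖ ^ N := by
      rw [hpow]
      have h3 : S ≤ L / 2 * ‖z‖ := by
        have h4 : 2 * S / L ≤ ‖z‖ := by linarith
        calc S = L / 2 * (2 * S / L) := by field_simp
        _ ≤ L / 2 * ‖z‖ := mul_le_mul_of_nonneg_left h4 (by positivity)
      calc S * ‖z‖ ^ (N - 1) ≤ (L / 2 * ‖z‖) * ‖z‖ ^ (N - 1) :=
            mul_le_mul_of_nonneg_right h3 (pow_nonneg (norm_nonneg z) _)
      _ = L / 2 * (‖z‖ ^ (N - 1) * ‖z‖) := by ring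
    have : L * ‖z‖ ^ N - (L/2) * ‖z‖ ^ N ≤ ‖Q.eval z‖ := by
      linarith
    calc L / 2 * ‖z‖ ^ N = L * ‖z‖ ^ N - (L/2) * ‖z‖ ^ N := by ring
    _ ≤ _ := this


lemma orhp_eq_zero (p : Polynomial ℝ)
    (h : ∀ z : ℂ, (p.map (algebraMap ℝ ℂ)).eval z = 0 → z.re < 0) : orhpCount p = 0 := by
  unfold orhpCount
  rw [Multiset.card_eq_zero, Multiset.filter_eq_nil]
  intro z hz
  exact not_lt.mpr (le_of_lt (h z (Polynomial.mem_roots'.mp hz).2))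


lemma bdd_ratio (P Q : Polynomial ℂ) (hdeg : P.natDegree ≤ Q.natDegree) (hQ0 : Q ≠ 0)
    (hQ : ∀ ω : ℝ, Q.eval ((ω : ℂ) * Complex.I) ≠ 0) :
    ∃ Mb : ℝ, ∀ ω : ℝ,
      ‖P.eval ((ω : ℂ) * Complex.I) / Q.eval ((ω : ℂ) * Complex.I)‖ ≤ Mb := by
  obtain ⟨R, c, hc, hR1, hlow⟩ := poly_abs_lower Q hQ0
  set SP := ∑ k ∈ Finset.range (P.natDegree + 1), ‖P.coeff k‖ with hSP
  set G : ℝ → ℝ := fun ω => ‖P.eval ((ω : ℂ) * Complex.I) / Q.eval ((ω : ℂ) * Complex.I)‖ with hG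
  have hcont : Continuous G := by
    have hι : Continuous fun ω : ℝ => (ω : ℂ) * Complex.I := by continuity
    have h1 : Continuous fun ω : ℝ => P.eval ((ω : ℂ) * Complex.I) :=
      (Polynomial.continuous P).comp hι
    have h2 : Continuous fun ω : ℝ => Q.eval ((ω : ℂ) * Complex.I) :=
      (Polynomial.continuous Q).comp hι
    exact continuous_norm.comp (h1.div h2 hQ)
  have hRpos : (0:ℝ) < R := lt_of_lt_of_le one_pos hR1
  obtain ⟨x₀, hx₀mem, hx₀max⟩ := isCompact_Icc.exists_isMaxOn
    (Set.nonempty_Icc.mpr (by linarith : -R ≤ R)) hcont.continuousOn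
  refine ⟨max (G x₀) (SP / c), ?_⟩
  intro ω
  rcases le_or_gt |ω| R with hω | hω
  · exact le_trans (hx₀max (Set.mem_Icc.mpr (abs_le.mp hω))) (le_max_left _ _)
  · have habs : ‖(ω : ℂ) * Complex.I‖ = |ω| := by
      rw [norm_mul, Complex.norm_I, Complex.norm_real, Real.norm_eq_abs, mul_one]
    set t := ‖(ω : ℂ) * Complex.I‖ with ht
    have hzR : R ≤ t := by rw [habs]; exact le_of_lt hω
    have hz1 : 1 ≤ t := le_trans hR1 hzR
    have hup := poly_abs_le P Q.natDegree hdeg ((ω : ℂ) * Complex.I) hz1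
    have hlo := hlow ((ω : ℂ) * Complex.I) hzR
    have hpowpos : (0:ℝ) < t ^ Q.natDegree := pow_pos (lt_of_lt_of_le one_pos hz1) _
    have hSP0 : 0 ≤ SP := Finset.sum_nonneg fun _ _ => norm_nonneg _
    refine le_trans ?_ (le_max_right _ _)
    show ‖P.eval ((ω : ℂ) * Complex.I) / Q.eval ((ω : ℂ) * Complex.I)‖ ≤ SP / c
    rw [norm_div]
    have hstep : ‖P.eval ((ω : ℂ) * Complex.I)‖
        / ‖Q.eval ((ω : ℂ) * Complex.I)‖
        ≤ (SP * t ^ Q.natDegree) / (c * t ^ Q.natDegree) :=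
      div_le_div₀ (mul_nonneg hSP0 (le_of_lt hpowpos)) hup (mul_pos hc hpowpos) hlo
    have heq : (SP * t ^ Q.natDegree) / (c * t ^ Q.natDegree) = SP / c := by
      rw [mul_comm SP, mul_comm c, mul_div_mul_left _ _ (ne_of_gt hpowpos)]
    rw [heq] at hstep
    exact hstep


/-- if moreover `g` has an odd number (with multiplicity) of ORHP
poles, then every `δ ∈ S(g)` satisfies `‖δ‖_{H∞} ≥ 1/|g(0)|`. -/
theorem stmt1 (n d : Polynomial ℝ) (hd : d ≠ 0) (hcop : IsCoprime n d)
    (hsp : n.degree < d.degree)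
    (hnoimag : ∀ ω : ℝ, (d.map (algebraMap ℝ ℂ)).eval ((ω : ℂ) * Complex.I) ≠ 0)
    (hunst : ∃ z : ℂ, (d.map (algebraMap ℝ ℂ)).eval z = 0 ∧ 0 < z.re)
    (hodd : Odd (orhpCount d))
    (b a : Polynomial ℝ) (hstab : Stabilizes b a n d) :
    1 / |n.eval 0 / d.eval 0| ≤ hinfNorm b a := by
  obtain ⟨ha0, hcop', hdegba, hstable, hchar⟩ := hstab
  set χ := a * d - b * n with hχ
  have hχ0 : χ ≠ 0 := by
    intro h
    have h1 := hchar 1 (by rw [h]; simp)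
    norm_num at h1
  -- sign facts
  obtain ⟨xa, hxa, hae⟩ := sign_eval_zero a ha0 (fun z hz => ne_of_lt (hstable z hz))
  obtain ⟨xc, hxc, hce⟩ := sign_eval_zero χ hχ0 (fun z hz => ne_of_lt (hchar z hz))
  obtain ⟨xd, hxd, hde⟩ := sign_eval_zero d hd (by
    intro z hz h0
    apply hnoimag z.im
    have hzz : z = (z.im : ℂ) * Complex.I := by
      apply Complex.ext <;> simp [h0]
    rwa [← hzz])
  rw [orhp_eq_zero a hstable, pow_zero, one_mul] at hae
  rw [orhp_eq_zero χ hchar, pow_zero, one_mul] at hce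
  rw [Odd.neg_one_pow hodd, neg_one_mul] at hde
  -- leading coefficients
  have hLa : a.leadingCoeff ≠ 0 := Polynomial.leadingCoeff_ne_zero.mpr ha0
  have hLd : d.leadingCoeff ≠ 0 := Polynomial.leadingCoeff_ne_zero.mpr hd
  have hdeglt : (b * n).degree < (a * d).degree := by
    rcases eq_or_ne (b * n) 0 with h | h
    · rw [h, Polynomial.degree_zero]
      exact bot_lt_iff_ne_bot.mpr (fun hh => mul_ne_zero ha0 hd (Polynomial.degree_eq_bot.mp hh))
    · obtain ⟨hb0, hn0⟩ := mul_ne_zero_iff.mp h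
      rw [Polynomial.degree_mul, Polynomial.degree_mul]
      exact WithBot.add_lt_add_of_le_of_lt
        (fun hh : b.degree = ⊥ => hb0 (Polynomial.degree_eq_bot.mp hh)) hdegba hsp
  have hleadχ : χ.leadingCoeff = a.leadingCoeff * d.leadingCoeff := by
    have hform : χ = -(b * n) + a * d := by rw [hχ]; ring
    rw [hform, Polynomial.leadingCoeff_add_of_degree_lt (by rwa [Polynomial.degree_neg]),
      Polynomial.leadingCoeff_mul]
  -- algebra
  set K := |a.leadingCoeff * d.leadingCoeff| with hK
  have hKpos : 0 < K := abs_pos.mpr (mul_ne_zero hLa hLd)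
  have hχeval : χ.eval 0 = a.eval 0 * d.eval 0 - b.eval 0 * n.eval 0 := by
    rw [hχ]; simp
  have hbn : b.eval 0 * n.eval 0 = -((xa * xd + xc) * (a.leadingCoeff * d.leadingCoeff)) := by
    have := hχeval
    rw [hce, hae, hde, hleadχ] at this
    linarith [this]
  have hbnabs : |b.eval 0 * n.eval 0| = (xa * xd + xc) * K := by
    rw [hbn, abs_neg, abs_mul, abs_of_pos (by positivity)]
  have hadabs : |a.eval 0 * d.eval 0| = (xa * xd) * K := by
    rw [hae, hde]
    rw [show xa * a.leadingCoeff * -(xd * d.leadingCoeff)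
      = -((xa * xd) * (a.leadingCoeff * d.leadingCoeff)) by ring]
    rw [abs_neg, abs_mul, abs_of_pos (by positivity)]
  have hkey : |a.eval 0 * d.eval 0| < |b.eval 0 * n.eval 0| := by
    rw [hbnabs, hadabs]
    have : (xa * xd) * K < (xa * xd + xc) * K := by nlinarith
    exact this
  have ha0' : a.eval 0 ≠ 0 := by rw [hae]; exact mul_ne_zero (ne_of_gt hxa) hLa
  have hd0' : d.eval 0 ≠ 0 := by
    rw [hde]
    simp only [neg_ne_zero]
    exact mul_ne_zero (ne_of_gt hxd) hLd
  have hn0' : n.eval 0 ≠ 0 := by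
    intro h
    rw [h, mul_zero, abs_zero] at hkey
    exact absurd hkey (not_lt.mpr (abs_nonneg _))
  -- from |a0 d0| < |b0 n0| conclude |d0|/|n0| < |b0|/|a0|
  have hfrac : |d.eval 0| / |n.eval 0| ≤ |b.eval 0| / |a.eval 0| := by
    rw [div_le_div_iff₀ (abs_pos.mpr hn0') (abs_pos.mpr ha0')]
    rw [abs_mul, abs_mul] at hkey
    nlinarith [abs_nonneg (b.eval 0), abs_nonneg (a.eval 0)]
  -- boundedness of the sup
  have hmapdeg : (b.map (algebraMap ℝ ℂ)).natDegree ≤ (a.map (algebraMap ℝ ℂ)).natDegree := by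
    rw [Polynomial.natDegree_map_eq_of_injective (algebraMap ℝ ℂ).injective,
      Polynomial.natDegree_map_eq_of_injective (algebraMap ℝ ℂ).injective]
    exact Polynomial.natDegree_le_natDegree hdegba
  have hmapa0 : a.map (algebraMap ℝ ℂ) ≠ 0 := by
    simpa [Polynomial.map_eq_zero_iff (algebraMap ℝ ℂ).injective] using ha0
  have hanoroot : ∀ ω : ℝ, (a.map (algebraMap ℝ ℂ)).eval ((ω : ℂ) * Complex.I) ≠ 0 := by
    intro ω h
    have := hstable _ h
    simp at this
  obtain ⟨Mb, hMb⟩ := bdd_ratio _ _ hmapdeg hmapa0 hanoroot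
  have hbdd : BddAbove (Set.range fun ω : ℝ => ‖ratEval b a (ω * Complex.I)‖) := by
    refine ⟨Mb, ?_⟩
    rintro y ⟨ω, rfl⟩
    exact hMb ω
  have hF0 : ‖ratEval b a (((0:ℝ) : ℂ) * Complex.I)‖ = |b.eval 0| / |a.eval 0| := by
    unfold ratEval
    rw [show (((0:ℝ) : ℂ) * Complex.I) = 0 by simp, eval_map_zero, eval_map_zero, norm_div]
    rw [Complex.norm_real, Complex.norm_real, Real.norm_eq_abs, Real.norm_eq_abs]
  have hle : ‖ratEval b a (((0:ℝ) : ℂ) * Complex.I)‖ ≤ hinfNorm b a :=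
    le_ciSup hbdd (0 : ℝ)
  rw [hF0] at hle
  calc 1 / |n.eval 0 / d.eval 0| = |d.eval 0| / |n.eval 0| := by
        rw [abs_div, one_div_div]
  _ ≤ |b.eval 0| / |a.eval 0| := hfrac
  _ ≤ hinfNorm b a := hle
end

section
/- (Root-locus perturbation, marginal mode at the origin.) Let p̂(s) and q(s) be real polynomials such that every root of p̂ has negative real part, q(0) ≠ 0, and deg q < 1 + deg p̂. Set p(s) := s · p̂(s). Then there exist a sign σ ∈ {+1, −1} and ε₀ > 0 such that for every real ε with 0 < σε < ε₀, every root of the polynomial p(s) − ε q(s) has negative real part. -/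
open Polynomial

lemma norm_eval_le_aux (p : Polynomial ℂ) (m : ℕ) (hm : p.natDegree ≤ m) (z : ℂ) (hz : 1 ≤ ‖z‖) :
    ‖p.eval z‖ ≤ (∑ i ∈ Finset.range (m+1), ‖p.coeff i‖) * ‖z‖ ^ m := by
  rw [Polynomial.eval_eq_sum_range' (Nat.lt_succ_of_le hm)]
  calc ‖∑ i ∈ Finset.range (m+1), p.coeff i * z ^ i‖
      ≤ ∑ i ∈ Finset.range (m+1), ‖p.coeff i * z ^ i‖ := norm_sum_le _ _
    _ ≤ ∑ i ∈ Finset.range (m+1), ‖p.coeff i‖ * ‖z‖ ^ m := by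
        refine Finset.sum_le_sum fun i hi => ?_
        rw [norm_mul, norm_pow]
        gcongr
        · exact Nat.lt_succ_iff.mp (Finset.mem_range.mp hi)
    _ = _ := (Finset.sum_mul _ _ _).symm

/-- root-locus perturbation with a simple marginal mode at the origin. -/
theorem stmt3 (phat q : Polynomial ℝ)
    (hstable : ∀ z : ℂ, (phat.map (algebraMap ℝ ℂ)).eval z = 0 → z.re < 0)
    (hq0 : q.eval 0 ≠ 0)
    (hdeg : q.degree < 1 + phat.degree) :
    ∃ σ : ℝ, (σ = 1 ∨ σ = -1) ∧ ∃ ε₀ : ℝ, 0 < ε₀ ∧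
      ∀ ε : ℝ, 0 < σ * ε → σ * ε < ε₀ →
        ∀ z : ℂ, ((Polynomial.X * phat - Polynomial.C ε * q).map (algebraMap ℝ ℂ)).eval z = 0 →
          z.re < 0 := by
  set P : Polynomial ℂ := phat.map (algebraMap ℝ ℂ) with hP
  set Q : Polynomial ℂ := q.map (algebraMap ℝ ℂ) with hQ
  have hinj : Function.Injective (algebraMap ℝ ℂ) := (algebraMap ℝ ℂ).injective
  have hphat_ne : phat ≠ 0 := by
    intro h
    rw [h] at hdeg
    simp at hdeg
  have hq_ne : q ≠ 0 := fun h => hq0 (by simp [h])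
  have hev0 : ∀ p : Polynomial ℝ, (p.map (algebraMap ℝ ℂ)).eval 0 = ((p.eval 0 : ℝ) : ℂ) := by
    intro p
    have : ((0:ℂ)) = algebraMap ℝ ℂ 0 := by simp
    rw [this, Polynomial.eval_map, Polynomial.eval₂_at_apply]
    rfl
  have hp0ne : phat.eval 0 ≠ 0 := by
    intro h
    have := hstable 0 (by rw [hev0, h]; simp)
    simp at this
  have hP0 : P.eval 0 ≠ 0 := by
    rw [hev0]
    exact_mod_cast hp0ne
  set c : ℝ := q.eval 0 / phat.eval 0 with hcdef
  have hc : c ≠ 0 := div_ne_zero hq0 hp0ne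
  set σ : ℝ := if 0 < c then -1 else 1 with hσ
  -- Step 1 : small-disc analysis
  set f : ℂ → ℂ := fun z => Q.eval z / P.eval z with hf
  have hf0 : f 0 = (c : ℂ) := by
    simp only [hf, hQ, hP, hev0, hcdef, Complex.ofReal_div]
  have hfc : ContinuousAt f 0 :=
    ((Q.continuous).continuousAt).div ((P.continuous).continuousAt) hP0
  obtain ⟨r₁, hr₁pos, hr₁⟩ := Metric.continuousAt_iff.mp hfc (|c|/2) (by positivity)
  have hPc : ContinuousAt (fun z => P.eval z) 0 := (P.continuous).continuousAt
  obtain ⟨r₂, hr₂pos, hr₂⟩ := Metric.continuousAt_iff.mp hPc (‖P.eval 0‖) (norm_pos_iff.mpr hP0)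
  set r : ℝ := min (min r₁ r₂) 1 with hr
  have hrpos : 0 < r := by positivity
  have hr1 : r ≤ 1 := min_le_right _ _
  have hPz_ne : ∀ z : ℂ, ‖z‖ < r → P.eval z ≠ 0 := by
    intro z hzr h0
    have hd : dist z 0 < r₂ := by
      rw [dist_zero_right]
      exact lt_of_lt_of_le hzr (le_trans (min_le_left _ _) (min_le_right _ _))
    have := hr₂ hd
    rw [h0, dist_zero_left] at this
    exact lt_irrefl _ this
  have step1 : ∀ (ε : ℝ) (z : ℂ), 0 < σ * ε → ‖z‖ < r →
      z * P.eval z = (ε : ℂ) * Q.eval z → z.re < 0 := by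
    intro ε z hσε hzr heq
    have hPz := hPz_ne z hzr
    have hzf : z = (ε : ℂ) * f z := by
      rw [hf]
      show z = _ * (_ / _)
      rw [← mul_div_assoc, eq_div_iff hPz]
      exact heq
    have hre : z.re = ε * (f z).re := by
      conv_lhs => rw [hzf]
      simp [Complex.mul_re]
    have hd : dist z 0 < r₁ := by
      rw [dist_zero_right]
      exact lt_of_lt_of_le hzr (le_trans (min_le_left _ _) (min_le_left _ _))
    have hfz := hr₁ hd
    rw [hf0] at hfz
    have habs : |(f z).re - c| < |c| / 2 := by
      have h1 : |(f z - (c:ℂ)).re| ≤ ‖f z - (c:ℂ)‖ := Complex.abs_re_le_norm _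
      have h2 : ‖f z - (c:ℂ)‖ = dist (f z) ((c:ℂ)) := (Complex.dist_eq _ _).symm
      have h3 : (f z - (c:ℂ)).re = (f z).re - c := by simp
      rw [h3] at h1
      rw [h2] at h1
      exact lt_of_le_of_lt h1 hfz
    rcases lt_or_gt_of_ne hc with hcneg | hcpos
    · -- c < 0, σ = 1, ε > 0, (f z).re < c/2 < 0
      have hσ1 : σ = 1 := by rw [hσ, if_neg (not_lt.mpr hcneg.le)]
      have hεpos : 0 < ε := by rwa [hσ1, one_mul] at hσε
      have : (f z).re < c / 2 := by
        rw [abs_of_neg hcneg] at habs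
        cases abs_lt.mp habs with
        | intro h1 h2 => linarith
      have hfzneg : (f z).re < 0 := by linarith
      rw [hre]
      exact mul_neg_of_pos_of_neg hεpos hfzneg
    · -- c > 0, σ = -1, ε < 0, (f z).re > c/2 > 0
      have hσ1 : σ = -1 := by rw [hσ, if_pos hcpos]
      have hεneg : ε < 0 := by
        rw [hσ1] at hσε
        linarith
      have : c / 2 < (f z).re := by
        rw [abs_of_pos hcpos] at habs
        cases abs_lt.mp habs with
        | intro h1 h2 => linarith
      have hfzpos : 0 < (f z).re := by linarith
      rw [hre]
      exact mul_neg_of_neg_of_pos hεneg hfzpos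
  -- degree bookkeeping
  set n : ℕ := phat.natDegree with hn
  have hPnd : P.natDegree = n := phat.natDegree_map_eq_of_injective hinj
  have hQnd : Q.natDegree ≤ n := by
    have h1 : q.degree = (q.natDegree : WithBot ℕ) := (degree_eq_natDegree hq_ne)
    have h2 : phat.degree = (n : WithBot ℕ) := (degree_eq_natDegree hphat_ne)
    rw [h1, h2] at hdeg
    have : (q.natDegree : WithBot ℕ) < ((1 + n : ℕ) : WithBot ℕ) := by
      rwa [Nat.cast_add, Nat.cast_one]
    have hlt : q.natDegree < 1 + n := by exact_mod_cast this
    have hmapq : Q.natDegree = q.natDegree := q.natDegree_map_eq_of_injective hinj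
    omega
  -- Step 2 : far-field bound
  have hL : 0 < |phat.leadingCoeff| := abs_pos.mpr (leadingCoeff_ne_zero.mpr hphat_ne)
  set Sq : ℝ := ∑ i ∈ Finset.range (n+1), ‖Q.coeff i‖ with hSq
  set Se : ℝ := ∑ i ∈ Finset.range n, ‖P.coeff i‖ with hSe
  have hSqnn : 0 ≤ Sq := Finset.sum_nonneg fun i _ => norm_nonneg _
  have hSenn : 0 ≤ Se := Finset.sum_nonneg fun i _ => norm_nonneg _
  set R : ℝ := max 1 ((Se + Sq + 1) / |phat.leadingCoeff|) with hR
  have hR1 : 1 ≤ R := le_max_left _ _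
  have step2 : ∀ (ε : ℝ) (z : ℂ), |ε| ≤ 1 → R < ‖z‖ →
      z * P.eval z ≠ (ε : ℂ) * Q.eval z := by
    intro ε z hε hzR heq
    have hz1 : 1 ≤ ‖z‖ := le_trans hR1 hzR.le
    have hz0 : 0 < ‖z‖ := lt_of_lt_of_le zero_lt_one hz1
    have hQb : ‖Q.eval z‖ ≤ Sq * ‖z‖ ^ n := norm_eval_le_aux Q n hQnd z hz1
    have hPev : P.eval z = ∑ i ∈ Finset.range (n+1), P.coeff i * z ^ i :=
      Polynomial.eval_eq_sum_range' (by omega : P.natDegree < n + 1) z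
    have hLcoeff : P.coeff n = ((phat.leadingCoeff : ℝ) : ℂ) := by
      rw [hP, Polynomial.coeff_map]
      congr 1
    have hsplit : z * P.eval z =
        (phat.leadingCoeff : ℂ) * z ^ (n+1) + ∑ i ∈ Finset.range n, P.coeff i * z ^ (i+1) := by
      have hs : ∀ i ∈ Finset.range n, z * (P.coeff i * z ^ i) = P.coeff i * z ^ (i+1) :=
        fun i _ => by ring
      rw [hPev, Finset.sum_range_succ, hLcoeff, mul_add, Finset.mul_sum, Finset.sum_congr rfl hs]
      ring
    have htail : ‖∑ i ∈ Finset.range n, P.coeff i * z ^ (i+1)‖ ≤ Se * ‖z‖ ^ n := by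
      calc ‖∑ i ∈ Finset.range n, P.coeff i * z ^ (i+1)‖
          ≤ ∑ i ∈ Finset.range n, ‖P.coeff i * z ^ (i+1)‖ := norm_sum_le _ _
        _ ≤ ∑ i ∈ Finset.range n, ‖P.coeff i‖ * ‖z‖ ^ n := by
            refine Finset.sum_le_sum fun i hi => ?_
            rw [norm_mul, norm_pow]
            gcongr
            · exact Finset.mem_range.mp hi
        _ = _ := (Finset.sum_mul _ _ _).symm
    have hmain : |phat.leadingCoeff| * ‖z‖ ^ (n+1) ≤ (Sq + Se) * ‖z‖ ^ n := by
      have h1 : (phat.leadingCoeff : ℂ) * z ^ (n+1) =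
          (ε : ℂ) * Q.eval z - ∑ i ∈ Finset.range n, P.coeff i * z ^ (i+1) := by
        linear_combination heq - hsplit
      have h2 : ‖(phat.leadingCoeff : ℂ) * z ^ (n+1)‖ ≤
          ‖(ε : ℂ) * Q.eval z‖ + ‖∑ i ∈ Finset.range n, P.coeff i * z ^ (i+1)‖ := by
        rw [h1]; exact norm_sub_le _ _
      have h3 : ‖(phat.leadingCoeff : ℂ) * z ^ (n+1)‖ = |phat.leadingCoeff| * ‖z‖ ^ (n+1) := by
        rw [norm_mul, norm_pow, Complex.norm_real, Real.norm_eq_abs]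
      have h4 : ‖(ε : ℂ) * Q.eval z‖ ≤ Sq * ‖z‖ ^ n := by
        rw [norm_mul, Complex.norm_real, Real.norm_eq_abs]
        calc |ε| * ‖Q.eval z‖ ≤ 1 * (Sq * ‖z‖ ^ n) := by
              apply mul_le_mul hε hQb (norm_nonneg _) zero_le_one
          _ = Sq * ‖z‖ ^ n := one_mul _
      rw [h3] at h2
      calc |phat.leadingCoeff| * ‖z‖ ^ (n+1)
          ≤ Sq * ‖z‖ ^ n + Se * ‖z‖ ^ n := by linarith
        _ = (Sq + Se) * ‖z‖ ^ n := by ring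
    have hzbig : Se + Sq + 1 < |phat.leadingCoeff| * ‖z‖ := by
      have := lt_of_le_of_lt (le_max_right 1 ((Se + Sq + 1) / |phat.leadingCoeff|)) hzR
      rwa [div_lt_iff₀ hL, mul_comm] at this
    have hpow : (0:ℝ) < ‖z‖ ^ n := pow_pos hz0 n
    have : |phat.leadingCoeff| * ‖z‖ ^ (n+1) = (|phat.leadingCoeff| * ‖z‖) * ‖z‖ ^ n := by
      rw [pow_succ]; ring
    nlinarith [hmain, hzbig, hpow]
  -- Step 3 : compact annular region
  set K : Set ℂ := Metric.closedBall 0 R ∩ {z : ℂ | r ≤ ‖z‖ ∧ 0 ≤ z.re} with hK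
  have hKclosed : IsClosed {z : ℂ | r ≤ ‖z‖ ∧ 0 ≤ z.re} := by
    have h1 : IsClosed {z : ℂ | r ≤ ‖z‖} := isClosed_le continuous_const continuous_norm
    have h2 : IsClosed {z : ℂ | 0 ≤ z.re} := isClosed_le continuous_const Complex.continuous_re
    exact h1.inter h2
  have hKcompact : IsCompact K := (isCompact_closedBall 0 R).inter_right hKclosed
  have hKne : K.Nonempty := by
    refine ⟨(R : ℂ), ?_, ?_, ?_⟩
    · rw [Metric.mem_closedBall, dist_zero_right, Complex.norm_real, Real.norm_eq_abs,
        abs_of_pos (lt_of_lt_of_le zero_lt_one hR1)]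
    · rw [Complex.norm_real, Real.norm_eq_abs, abs_of_pos (lt_of_lt_of_le zero_lt_one hR1)]
      exact le_trans hr1 hR1
    · simp only [Complex.ofReal_re]
      linarith
  obtain ⟨z₀, hz₀K, hz₀min⟩ := hKcompact.exists_isMinOn hKne
    ((continuous_id.mul P.continuous).norm.continuousOn)
  obtain ⟨z₁, hz₁K, hz₁max⟩ := hKcompact.exists_isMaxOn hKne
    ((Q.continuous).norm.continuousOn)
  set m : ℝ := ‖z₀ * P.eval z₀‖ with hm
  set MQ : ℝ := ‖Q.eval z₁‖ with hMQ
  have hmpos : 0 < m := by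
    rw [hm, norm_pos_iff]
    obtain ⟨_, hz₀r, hz₀re⟩ := hz₀K
    have hz₀ne : z₀ ≠ 0 := by
      intro h
      rw [h] at hz₀r
      simp at hz₀r
      linarith
    have hPz₀ : P.eval z₀ ≠ 0 := fun h => absurd hz₀re (not_le.mpr (hstable z₀ h))
    exact mul_ne_zero hz₀ne hPz₀
  have hMQnn : 0 ≤ MQ := norm_nonneg _
  refine ⟨σ, ?_, min 1 (m / (MQ + 1)), ?_, ?_⟩
  · rw [hσ]; split <;> simp
  · apply lt_min zero_lt_one
    positivity
  · intro ε hσε hεlt z hz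
    have hεabs : |ε| = σ * ε := by
      have : |σ| = 1 := by rw [hσ]; split <;> simp
      calc |ε| = |σ| * |ε| := by rw [this, one_mul]
        _ = |σ * ε| := (abs_mul σ ε).symm
        _ = σ * ε := abs_of_pos hσε
    have hε1 : |ε| ≤ 1 := by
      rw [hεabs]
      exact le_of_lt (lt_of_lt_of_le hεlt (min_le_left _ _))
    have heq : z * P.eval z = (ε : ℂ) * Q.eval z := by
      have h1 : ((Polynomial.X * phat - Polynomial.C ε * q).map (algebraMap ℝ ℂ)).eval z
          = z * P.eval z - (ε : ℂ) * Q.eval z := by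
        simp [Polynomial.map_sub, Polynomial.map_mul, hP, hQ]
      rw [h1] at hz
      linear_combination hz
    by_cases hzr : ‖z‖ < r
    · exact step1 ε z hσε hzr heq
    · by_contra hre
      push_neg at hre
      push_neg at hzr
      by_cases hzR : ‖z‖ ≤ R
      · have hzK : z ∈ K := ⟨by rwa [Metric.mem_closedBall, dist_zero_right], hzr, hre⟩
        have h1 : m ≤ ‖z * P.eval z‖ := hz₀min hzK
        have h2 : ‖Q.eval z‖ ≤ MQ := hz₁max hzK
        have h3 : ‖z * P.eval z‖ = |ε| * ‖Q.eval z‖ := by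
          rw [heq, norm_mul, Complex.norm_real, Real.norm_eq_abs]
        have h4 : σ * ε < m / (MQ + 1) := lt_of_lt_of_le hεlt (min_le_right _ _)
        have h5 : |ε| * ‖Q.eval z‖ < m := by
          calc |ε| * ‖Q.eval z‖ ≤ |ε| * (MQ + 1) := by
                apply mul_le_mul_of_nonneg_left (by linarith) (abs_nonneg _)
            _ = (σ * ε) * (MQ + 1) := by rw [hεabs]
            _ < (m / (MQ + 1)) * (MQ + 1) := by
                apply mul_lt_mul_of_pos_right h4
                linarith
            _ = m := by field_simp
        rw [h3] at h1
        linarith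
      · push_neg at hzR
        exact step2 ε z hε1 hzR heq
end

section
/- (Root-locus perturbation, marginal mode at a conjugate pair.) Let ω_c > 0, and let p̃(s) and q(s) be real polynomials such that every root of p̃ has negative real part, deg q < 2 + deg p̃, q(iω_c) ≠ 0, and Re( q(iω_c) / (2iω_c · p̃(iω_c)) ) ≠ 0. Set p(s) := (s² + ω_c²) p̃(s). Then there exist a sign σ ∈ {+1, −1} and ε₀ > 0 such that for every real ε with 0 < σε < ε₀, every root of the polynomial p(s) − ε q(s) has negative real part. -/
open Polynomial

open Finset in
lemma stmt4_growth (P Q : Polynomial ℂ) (h0 : 0 < P.natDegree) (hd : Q.natDegree < P.natDegree) :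
    ∃ R : ℝ, ∀ z : ℂ, R ≤ ‖z‖ → ‖Q.eval z‖ < ‖P.eval z‖ := by
  obtain ⟨k, hk⟩ : ∃ k, P.natDegree = k + 1 := ⟨P.natDegree - 1, by omega⟩
  have hP0 : P ≠ 0 := fun h => by simp [h] at h0
  set a := ‖P.leadingCoeff‖ with ha
  have ha0 : 0 < a := norm_pos_iff.2 (leadingCoeff_ne_zero.2 hP0)
  set CP := ∑ i ∈ range (k + 1), ‖P.coeff i‖ with hCP
  set CQ := ∑ i ∈ range (k + 1), ‖Q.coeff i‖ with hCQ
  refine ⟨max 1 ((CP + CQ) / a + 1), fun z hz => ?_⟩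
  have hz1 : (1 : ℝ) ≤ ‖z‖ := le_trans (le_max_left _ _) hz
  have hzpos : 0 < ‖z‖ ^ k := pow_pos (lt_of_lt_of_le one_pos hz1) k
  have key : ∀ p : Polynomial ℂ, ‖∑ i ∈ range (k + 1), p.coeff i * z ^ i‖ ≤
      (∑ i ∈ range (k + 1), ‖p.coeff i‖) * ‖z‖ ^ k := by
    intro p
    calc ‖∑ i ∈ range (k + 1), p.coeff i * z ^ i‖
        ≤ ∑ i ∈ range (k + 1), ‖p.coeff i * z ^ i‖ := norm_sum_le _ _
      _ ≤ ∑ i ∈ range (k + 1), ‖p.coeff i‖ * ‖z‖ ^ k := by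
          refine Finset.sum_le_sum fun i hi => ?_
          rw [norm_mul, norm_pow]
          exact mul_le_mul_of_nonneg_left
            (pow_le_pow_right₀ hz1 (by have := Finset.mem_range.mp hi; omega : i ≤ k)) (norm_nonneg _)
      _ = (∑ i ∈ range (k + 1), ‖p.coeff i‖) * ‖z‖ ^ k := by rw [Finset.sum_mul]
  have hQle : ‖Q.eval z‖ ≤ CQ * ‖z‖ ^ k := by
    rw [eval_eq_sum_range' (by omega : Q.natDegree < k + 1)]
    exact key Q
  have hPeval : P.eval z = (∑ i ∈ range (k + 1), P.coeff i * z ^ i) +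
      P.leadingCoeff * z ^ (k + 1) := by
    rw [eval_eq_sum_range, hk, Finset.sum_range_succ, leadingCoeff, hk]
  have hPge : a * ‖z‖ ^ (k + 1) - CP * ‖z‖ ^ k ≤ ‖P.eval z‖ := by
    set S := ∑ i ∈ range (k + 1), P.coeff i * z ^ i with hS
    have h2 : ‖P.leadingCoeff * z ^ (k + 1)‖ ≤ ‖S + P.leadingCoeff * z ^ (k + 1)‖ + ‖S‖ := by
      have := norm_sub_le (S + P.leadingCoeff * z ^ (k + 1)) S
      simpa using this
    rw [norm_mul, norm_pow] at h2
    have hkP := key P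
    rw [hPeval]
    linarith
  have hfin : CQ * ‖z‖ ^ k < a * ‖z‖ ^ (k + 1) - CP * ‖z‖ ^ k := by
    have haz : CP + CQ + a ≤ a * ‖z‖ := by
      have : (CP + CQ) / a + 1 ≤ ‖z‖ := le_trans (le_max_right _ _) hz
      calc CP + CQ + a = ((CP + CQ) / a + 1) * a := by field_simp
        _ ≤ ‖z‖ * a := by nlinarith
        _ = a * ‖z‖ := mul_comm _ _
    have : (CP + CQ + a) * ‖z‖ ^ k ≤ a * ‖z‖ * ‖z‖ ^ k :=
      mul_le_mul_of_nonneg_right haz hzpos.le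
    have hpow : a * ‖z‖ * ‖z‖ ^ k = a * ‖z‖ ^ (k + 1) := by ring
    nlinarith [mul_pos ha0 hzpos]
  linarith

/-- root-locus perturbation with a simple marginal conjugate pair `±iω_c`. -/
theorem stmt4 (ωc : ℝ) (hωc : 0 < ωc) (ptil q : Polynomial ℝ)
    (hstable : ∀ z : ℂ, (ptil.map (algebraMap ℝ ℂ)).eval z = 0 → z.re < 0)
    (hdeg : q.degree < 2 + ptil.degree)
    (hq : (q.map (algebraMap ℝ ℂ)).eval ((ωc : ℂ) * Complex.I) ≠ 0)
    (hre : ((q.map (algebraMap ℝ ℂ)).eval ((ωc : ℂ) * Complex.I) /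
        (2 * ((ωc : ℂ) * Complex.I) * (ptil.map (algebraMap ℝ ℂ)).eval ((ωc : ℂ) * Complex.I))).re
        ≠ 0) :
    ∃ σ : ℝ, (σ = 1 ∨ σ = -1) ∧ ∃ ε₀ : ℝ, 0 < ε₀ ∧
      ∀ ε : ℝ, 0 < σ * ε → σ * ε < ε₀ →
        ∀ z : ℂ, (((Polynomial.X ^ 2 + Polynomial.C (ωc ^ 2)) * ptil -
            Polynomial.C ε * q).map (algebraMap ℝ ℂ)).eval z = 0 → z.re < 0 := by
  set φ := algebraMap ℝ ℂ with hφdef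
  have hφ : ∀ x : ℝ, φ x = (x : ℂ) := fun x => rfl
  set ptc := ptil.map φ with hptc
  set qc := q.map φ with hqc
  set z₀ : ℂ := (ωc : ℂ) * Complex.I with hz₀
  -- nonzeroness
  have hptil0 : ptil ≠ 0 := by
    intro h
    have := hstable 1 (by simp [hptc, h])
    norm_num at this
  have hq0 : q ≠ 0 := by
    intro h; apply hq; simp [hqc, h]
  -- the unperturbed complex polynomial
  set Pc : Polynomial ℂ := ((Polynomial.X ^ 2 + Polynomial.C (ωc ^ 2)) * ptil).map φ with hPc
  -- eval identities
  have hPeval : ∀ z : ℂ, Pc.eval z = (z ^ 2 + (ωc : ℂ) ^ 2) * ptc.eval z := by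
    intro z
    simp [hPc, hptc, Polynomial.map_mul, Polynomial.map_add, Polynomial.map_pow, hφ, map_pow]
  have hroot : ∀ (ε : ℝ) (z : ℂ),
      (((Polynomial.X ^ 2 + Polynomial.C (ωc ^ 2)) * ptil -
        Polynomial.C ε * q).map φ).eval z = Pc.eval z - (ε : ℂ) * qc.eval z := by
    intro ε z
    simp [hPc, hqc, Polynomial.map_sub, Polynomial.map_mul, Polynomial.map_add,
      Polynomial.map_pow, hφ]
  -- degrees
  have hX2 : ((Polynomial.X : Polynomial ℝ) ^ 2 + Polynomial.C (ωc ^ 2)) ≠ 0 := by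
    intro h
    have h2 : ((Polynomial.X : Polynomial ℝ) ^ 2 + Polynomial.C (ωc ^ 2)).natDegree = 2 :=
      Polynomial.natDegree_X_pow_add_C
    rw [h] at h2
    simp at h2
  have hnatP : ((Polynomial.X ^ 2 + Polynomial.C (ωc ^ 2)) * ptil).natDegree =
      2 + ptil.natDegree := by
    rw [Polynomial.natDegree_mul hX2 hptil0, Polynomial.natDegree_X_pow_add_C]
  have hdegprod : q.degree < ((Polynomial.X ^ 2 + Polynomial.C (ωc ^ 2)) * ptil).degree := by
    rw [Polynomial.degree_mul, Polynomial.degree_X_pow_add_C (by norm_num) (ωc ^ 2)]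
    exact_mod_cast hdeg
  have hdegP : 0 < Pc.natDegree ∧ qc.natDegree < Pc.natDegree := by
    rw [hPc, hqc, Polynomial.natDegree_map, Polynomial.natDegree_map, hnatP]
    exact ⟨by omega, by
      have := Polynomial.natDegree_lt_natDegree hq0 hdegprod
      omega⟩
  -- uniform root bound
  obtain ⟨R₀, hR₀⟩ := stmt4_growth Pc qc hdegP.1 hdegP.2
  set R : ℝ := max R₀ (2 * ωc) with hR
  -- the compact set
  set K : Set ℂ := Metric.closedBall 0 R ∩ {z : ℂ | 0 ≤ z.re} with hK
  have hKc : IsCompact K :=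
    (isCompact_closedBall 0 R).inter_right (isClosed_le continuous_const Complex.continuous_re)
  have hR0 : (0:ℝ) ≤ R := le_trans (by positivity) (le_max_right R₀ (2 * ωc))
  have hKne : K.Nonempty := ⟨0, by simp [hK, hR0]⟩
  -- lower bound m for ptc on K
  obtain ⟨m, hm0, hmle⟩ : ∃ m : ℝ, 0 < m ∧ ∀ z ∈ K, m ≤ ‖ptc.eval z‖ := by
    obtain ⟨x, hxK, hx⟩ := hKc.exists_isMinOn hKne
      ((ptc.continuous_aeval.norm).continuousOn (s := K))
    refine ⟨‖ptc.eval x‖, ?_, fun w hw => by simpa using hx hw⟩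
    rw [norm_pos_iff]
    intro h
    have := hstable x (by simpa using h)
    exact absurd this (not_lt.2 hxK.2)
  -- upper bound M for qc on K
  obtain ⟨M, hM0, hMle⟩ : ∃ M : ℝ, 0 < M ∧ ∀ z ∈ K, ‖qc.eval z‖ ≤ M := by
    obtain ⟨x, _, hx⟩ := hKc.exists_isMaxOn hKne
      ((qc.continuous_aeval.norm).continuousOn (s := K))
    exact ⟨max ‖qc.eval x‖ 1, lt_of_lt_of_le one_pos (le_max_right _ _),
      fun w hw => le_trans (by simpa using hx hw) (le_max_left _ _)⟩
  -- the local function and its sign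
  set g : ℂ → ℂ := fun z => qc.eval z / ((z + z₀) * ptc.eval z) with hg
  set r : ℝ := (g z₀).re with hr
  have hptz₀ : ptc.eval z₀ ≠ 0 := by
    intro h
    have := hstable z₀ h
    simp [hz₀] at this
  have hz₀ne : z₀ ≠ 0 := mul_ne_zero (Complex.ofReal_ne_zero.2 hωc.ne') Complex.I_ne_zero
  have hden₀ : (z₀ + z₀) * ptc.eval z₀ ≠ 0 :=
    mul_ne_zero (by rw [← two_mul]; exact mul_ne_zero two_ne_zero hz₀ne) hptz₀
  have hr0 : r ≠ 0 := by
    have : g z₀ = qc.eval z₀ / (2 * z₀ * ptc.eval z₀) := by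
      rw [hg]; ring_nf
    rw [hr, this]; exact hre
  -- continuity: choose δ'
  obtain ⟨δ', hδ'0, hδ'⟩ : ∃ δ' > 0, ∀ z : ℂ, ‖z - z₀‖ < δ' → |(g z).re - r| < |r| := by
    have hcont : ContinuousAt (fun z => (g z).re) z₀ := by
      apply Complex.continuous_re.continuousAt.comp
      exact ContinuousAt.div (qc.continuous_aeval.continuousAt)
        (((continuous_id.add continuous_const).mul ptc.continuous_aeval).continuousAt) hden₀
    have := Metric.continuousAt_iff.1 hcont |r| (abs_pos.2 hr0)
    obtain ⟨δ', hδ'0, hd⟩ := this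
    refine ⟨δ', hδ'0, fun z hz => ?_⟩
    have := hd (show dist z z₀ < δ' by rwa [dist_eq_norm])
    rwa [Real.dist_eq, ← hr] at this
  set δ : ℝ := min (δ' / 2) (ωc / 2) with hδ
  have hδ0 : 0 < δ := by positivity
  have hδωc : δ ≤ ωc / 2 := min_le_right _ _
  have hδδ' : δ < δ' := lt_of_le_of_lt (min_le_left _ _) (by linarith)
  -- choose σ and ε₀
  set σ : ℝ := if 0 < r then -1 else 1 with hσ
  set ε₀ : ℝ := min 1 (δ * ωc * m / M) with hε₀
  refine ⟨σ, by rw [hσ]; split <;> simp, ε₀, by positivity, ?_⟩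
  intro ε hε1 hε2 z hzroot
  rw [hroot] at hzroot
  by_contra hcon
  push_neg at hcon
  -- |ε| = σ * ε
  have hεabs : |ε| = σ * ε := by
    rw [hσ] at hε1 ⊢; split at hε1 <;> split <;>
      first | (rw [abs_of_neg (by linarith)]; ring) | (rw [abs_of_pos (by linarith)]; ring) |
        simp_all
  have hzeq : Pc.eval z = (ε : ℂ) * qc.eval z := by rwa [sub_eq_zero] at hzroot
  have hεle1 : |ε| ≤ 1 := by
    rw [hεabs]; exact le_of_lt (lt_of_lt_of_le hε2 (min_le_left _ _))
  have hεM : |ε| * M < δ * ωc * m := by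
    have h1 : σ * ε < δ * ωc * m / M := lt_of_lt_of_le hε2 (min_le_right _ _)
    have h2 := mul_lt_mul_of_pos_right h1 hM0
    rw [div_mul_cancel₀ _ hM0.ne'] at h2
    rwa [hεabs]
  have hznorm : ‖z‖ < R₀ := by
    by_contra hzR; push_neg at hzR
    have h1 := hR₀ z hzR
    have h2 : ‖Pc.eval z‖ = |ε| * ‖qc.eval z‖ := by
      rw [hzeq, norm_mul, Complex.norm_real, Real.norm_eq_abs]
    nlinarith [norm_nonneg (qc.eval z)]
  have hzK : z ∈ K := by
    refine ⟨?_, hcon⟩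
    simp only [Metric.mem_closedBall, dist_zero_right]
    exact le_trans hznorm.le (le_max_left _ _)
  have hfact : ∀ w : ℂ, (w - z₀) * (w + z₀) = w ^ 2 + (ωc : ℂ) ^ 2 := by
    intro w
    have h1 : z₀ ^ 2 = -((ωc : ℂ) ^ 2) := by
      rw [hz₀, mul_pow, Complex.I_sq]; ring
    calc (w - z₀) * (w + z₀) = w ^ 2 - z₀ ^ 2 := by ring
      _ = w ^ 2 + (ωc : ℂ) ^ 2 := by rw [h1]; ring
  have h2z₀ : ‖(2 : ℂ) * z₀‖ = 2 * ωc := by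
    rw [hz₀]
    simp [norm_mul, Complex.norm_real, Real.norm_eq_abs, abs_of_pos hωc]
  have hprod : ‖z - z₀‖ * ‖z + z₀‖ * ‖ptc.eval z‖ = |ε| * ‖qc.eval z‖ := by
    have h1 : (z - z₀) * (z + z₀) * ptc.eval z = (ε : ℂ) * qc.eval z := by
      rw [hfact z, ← hPeval, hzeq]
    calc ‖z - z₀‖ * ‖z + z₀‖ * ‖ptc.eval z‖
        = ‖(z - z₀) * (z + z₀) * ptc.eval z‖ := by rw [norm_mul, norm_mul]
      _ = ‖(ε : ℂ) * qc.eval z‖ := by rw [h1]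
      _ = |ε| * ‖qc.eval z‖ := by rw [norm_mul, Complex.norm_real, Real.norm_eq_abs]
  have hsmall : ‖z - z₀‖ * ‖z + z₀‖ < δ * ωc := by
    have h1 : ‖z - z₀‖ * ‖z + z₀‖ * m ≤ |ε| * M := by
      calc ‖z - z₀‖ * ‖z + z₀‖ * m
          ≤ ‖z - z₀‖ * ‖z + z₀‖ * ‖ptc.eval z‖ :=
            mul_le_mul_of_nonneg_left (hmle z hzK) (by positivity)
        _ = |ε| * ‖qc.eval z‖ := hprod
        _ ≤ |ε| * M := mul_le_mul_of_nonneg_left (hMle z hzK) (abs_nonneg ε)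
    have h2 : ‖z - z₀‖ * ‖z + z₀‖ * m < δ * ωc * m := lt_of_le_of_lt h1 hεM
    exact lt_of_mul_lt_mul_right h2 hm0.le
  -- key local analysis near z₀
  have key : ∀ w : ℂ, Pc.eval w = (ε : ℂ) * qc.eval w → 0 ≤ w.re → ‖w - z₀‖ < δ → False := by
    intro w hweq hwre hwδ
    have hwplus : 2 * ωc - δ ≤ ‖w + z₀‖ := by
      have ha : ‖(2 : ℂ) * z₀‖ ≤ ‖(w - z₀) + 2 * z₀‖ + ‖w - z₀‖ := by
        have := norm_sub_le ((w - z₀) + 2 * z₀) (w - z₀)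
        simpa using this
      rw [h2z₀] at ha
      have hb : w + z₀ = (w - z₀) + 2 * z₀ := by ring
      rw [hb]
      linarith
    have hwz₀ : w + z₀ ≠ 0 := by
      intro h
      rw [h, norm_zero] at hwplus
      linarith
    have hptw : ptc.eval w ≠ 0 := fun h => absurd (hstable w h) (not_lt.2 hwre)
    have hden : (w + z₀) * ptc.eval w ≠ 0 := mul_ne_zero hwz₀ hptw
    rw [hPeval] at hweq
    have hweq2 : w - z₀ = (ε : ℂ) * g w := by
      rw [hg]
      simp only
      rw [mul_div_assoc', eq_div_iff hden]
      linear_combination hweq + (ptc.eval w) * (hfact w)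
    have hwrecalc : w.re = ε * (g w).re := by
      have h1 : (w - z₀).re = ε * (g w).re := by
        rw [hweq2]
        simp [Complex.mul_re, Complex.ofReal_re, Complex.ofReal_im]
      have h2 : z₀.re = 0 := by simp [hz₀]
      rw [Complex.sub_re, h2, sub_zero] at h1
      exact h1
    have hsign := hδ' w (lt_trans hwδ hδδ')
    rw [abs_lt] at hsign
    rcases hr0.lt_or_gt with hrneg | hrpos
    · have hσ1 : σ = 1 := by rw [hσ, if_neg (not_lt.2 hrneg.le)]
      rw [hσ1, one_mul] at hε1
      have hgw : (g w).re < 0 := by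
        have := hsign.2; rw [abs_of_neg hrneg] at this; linarith
      have : w.re < 0 := by rw [hwrecalc]; exact mul_neg_of_pos_of_neg hε1 hgw
      linarith
    · have hσ1 : σ = -1 := by rw [hσ, if_pos hrpos]
      rw [hσ1] at hε1
      have hεneg : ε < 0 := by linarith
      have hgw : 0 < (g w).re := by
        have := hsign.1; rw [abs_of_pos hrpos] at this; linarith
      have : w.re < 0 := by rw [hwrecalc]; exact mul_neg_of_neg_of_pos hεneg hgw
      linarith
  -- split into the two conjugate cases
  have h2ωc : 2 * ωc ≤ ‖z - z₀‖ + ‖z + z₀‖ := by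
    have h1 : ‖(z + z₀) - (z - z₀)‖ ≤ ‖z + z₀‖ + ‖z - z₀‖ := norm_sub_le _ _
    have h2 : (z + z₀) - (z - z₀) = 2 * z₀ := by ring
    rw [h2, h2z₀] at h1
    linarith
  rcases le_total ‖z - z₀‖ ‖z + z₀‖ with hc | hc
  · have hωle : ωc ≤ ‖z + z₀‖ := by linarith
    have h1 : ‖z - z₀‖ * ωc ≤ ‖z - z₀‖ * ‖z + z₀‖ :=
      mul_le_mul_of_nonneg_left hωle (norm_nonneg _)
    have hlt : ‖z - z₀‖ < δ := by
      have h2 : ‖z - z₀‖ * ωc < δ * ωc := lt_of_le_of_lt h1 hsmall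
      exact lt_of_mul_lt_mul_right h2 hωc.le
    exact key z hzeq hcon hlt
  · have hωle : ωc ≤ ‖z - z₀‖ := by linarith
    have h1 : ‖z + z₀‖ * ωc ≤ ‖z - z₀‖ * ‖z + z₀‖ := by
      rw [mul_comm ‖z - z₀‖]
      exact mul_le_mul_of_nonneg_left hωle (norm_nonneg _)
    have hlt : ‖z + z₀‖ < δ := by
      have h2 : ‖z + z₀‖ * ωc < δ * ωc := lt_of_le_of_lt h1 hsmall
      exact lt_of_mul_lt_mul_right h2 hωc.le
    set w := (starRingEnd ℂ) z with hw
    have hconj : ∀ p : Polynomial ℝ, (p.map φ).eval w = (starRingEnd ℂ) ((p.map φ).eval z) := by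
      intro p
      have h1 := Polynomial.aeval_conj (K := ℂ) p z
      rwa [Polynomial.aeval_def, Polynomial.aeval_def, ← Polynomial.eval_map,
        ← Polynomial.eval_map] at h1
    have hweq : Pc.eval w = (ε : ℂ) * qc.eval w := by
      rw [hPc, hconj, ← hPc, hzeq, map_mul, Complex.conj_ofReal, hqc, hconj, ← hqc]
    have hwre : 0 ≤ w.re := by rw [hw]; simpa [Complex.conj_re] using hcon
    have hwd : ‖w - z₀‖ < δ := by
      have hb : w - z₀ = (starRingEnd ℂ) (z + z₀) := by
        rw [hw, hz₀]
        simp [map_add, Complex.conj_ofReal, Complex.conj_I]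
        ring
      rw [hb, RCLike.norm_conj]
      exact hlt
    exact key w hweq hwre hwd
end

section
/- Let g(s) = (ζs − k)/(s³ + ps² + qs + ℓ) with real parameters ζ, k, p, q, ℓ, where k ≠ 0, ℓ ≠ 0, and the numerator and denominator are coprime. Then the following are equivalent: (A) the denominator s³ + ps² + qs + ℓ has an odd number (with multiplicity) of roots with positive real part, and the constant perturbation δ₀ = 1/g(0) = −ℓ/k yields the closed-loop characteristic polynomial s³ + ps² + (q + ζℓ/k)s, which has a simple root at 0 and two roots with negative real part; (B) p > 0, ℓ < 0, and q + ζℓ/k > 0. Moreover, under (B), the robust instability radius is exactly ρ*(g) = 1/|g(0)| = |ℓ/k|. -/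
open Polynomial

/-- Numerator `ζs − k` of the third order transfer function. -/
noncomputable def numer3 (ζ k : ℝ) : Polynomial ℝ :=
  Polynomial.C ζ * Polynomial.X - Polynomial.C k

/-- Denominator `s³ + ps² + qs + ℓ` of the third order transfer function. -/
noncomputable def denom3 (p q ℓ : ℝ) : Polynomial ℝ :=
  Polynomial.X ^ 3 + Polynomial.C p * Polynomial.X ^ 2 + Polynomial.C q * Polynomial.X +
    Polynomial.C ℓ

open Filter Set
lemma eval_map_real (φ : Polynomial ℝ) (t : ℝ) :
    (φ.map (algebraMap ℝ ℂ)).eval (t:ℂ) = ((φ.eval t : ℝ) : ℂ) := by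
  rw [Polynomial.eval_map, ← Complex.coe_algebraMap, Polynomial.eval₂_at_apply]

lemma quad_stable (p c : ℝ) (hp : 0 < p) (hc : 0 < c) (z : ℂ)
    (hz : z^2 + (p:ℂ)*z + (c:ℂ) = 0) : z.re < 0 := by
  obtain ⟨x, y⟩ := z
  by_contra hre
  push_neg at hre
  simp only [Complex.neg_re, Complex.ofReal_re] at hre
  have h1 := congrArg Complex.re hz
  have h2 := congrArg Complex.im hz
  simp [pow_two, Complex.add_re, Complex.add_im, Complex.mul_re, Complex.mul_im,
    Complex.ofReal_re, Complex.ofReal_im] at h1 h2 hre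
  have hyz : y = 0 := by nlinarith
  rw [hyz] at h1
  nlinarith

lemma cubic_stable (p c1 c0 : ℝ) (hp : 0 < p) (hc0 : 0 < c0) (hrh : c0 < p*c1) (z : ℂ)
    (hz : z^3 + (p:ℂ)*z^2 + (c1:ℂ)*z + (c0:ℂ) = 0) : z.re < 0 := by
  have hc1 : 0 < c1 := by nlinarith
  obtain ⟨x, y⟩ := z
  by_contra hre
  push_neg at hre
  have h1 := congrArg Complex.re hz
  have h2 := congrArg Complex.im hz
  simp [pow_succ, pow_two, Complex.add_re, Complex.add_im, Complex.mul_re, Complex.mul_im,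
    Complex.ofReal_re, Complex.ofReal_im] at h1 h2 hre
  rcases eq_or_ne y 0 with hy0 | hy0
  · rw [hy0] at h1; simp at h1; nlinarith
  · have h3 : y * (3*x*x - y*y + 2*p*x + c1) = 0 := by linear_combination h2
    have hysq : y*y = 3*x*x + 2*p*x + c1 := by
      rcases mul_eq_zero.1 h3 with h | h
      · exact absurd h hy0
      · linarith
    have h4 : -8*(x*x*x) - 8*p*(x*x) - (2*c1+2*p*p)*x + (c0 - p*c1) = 0 := by
      linear_combination h1 + (3*x+p)*hysq
    nlinarith [mul_nonneg (mul_nonneg hre hre) hre, mul_nonneg hp.le (mul_nonneg hre hre), mul_nonneg hc1.le hre, mul_nonneg (mul_nonneg hp.le hp.le) hre]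

lemma quad_params (p c : ℝ) (hc : c ≠ 0)
    (h : ∀ z : ℂ, z^2 + (p:ℂ)*z + (c:ℂ) = 0 → z ≠ 0 → z.re < 0) : 0 < p ∧ 0 < c := by
  rcases le_or_gt 0 (p^2 - 4*c) with hD | hD
  · set s := Real.sqrt (p^2 - 4*c) with hs
    have hs2 : s^2 = p^2 - 4*c := Real.sq_sqrt hD
    have hs0 : 0 ≤ s := Real.sqrt_nonneg _
    set r := (-p + s)/2 with hr
    have hroot : r^2 + p*r + c = 0 := by rw [hr]; ring_nf; linarith [hs2]
    have hrne : r ≠ 0 := by intro h0; rw [h0] at hroot; simp at hroot; exact hc (by linarith)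
    have := h (r:ℂ) (by push_cast; exact_mod_cast (by exact_mod_cast congrArg (Complex.ofReal) hroot : ((r^2+p*r+c : ℝ) : ℂ) = ((0:ℝ):ℂ))) (by exact_mod_cast hrne)
    rw [Complex.ofReal_re] at this
    have hsp : s < p := by rw [hr] at this; linarith
    have hp : 0 < p := lt_of_le_of_lt hs0 hsp
    refine ⟨hp, ?_⟩
    nlinarith [hs2, hsp, hs0]
  · set s := Real.sqrt (4*c - p^2) with hs
    have hs2 : s^2 = 4*c - p^2 := Real.sq_sqrt (by linarith)
    have hs0 : 0 < s := Real.sqrt_pos.2 (by linarith)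
    set z : ℂ := ⟨-p/2, s/2⟩ with hz
    have hroot : z^2 + (p:ℂ)*z + (c:ℂ) = 0 := by
      rw [Complex.ext_iff]
      constructor <;>
        simp [hz, pow_two, Complex.add_re, Complex.add_im, Complex.mul_re, Complex.mul_im] <;>
        nlinarith [hs2]
    have hzne : z ≠ 0 := by
      intro h0
      have : z.im = 0 := by rw [h0]; simp
      rw [hz] at this; simp at this; linarith
    have := h z hroot hzne
    rw [hz] at this; simp at this
    have hp : 0 < p := by linarith
    exact ⟨hp, by nlinarith⟩

lemma stable_sign (φ : Polynomial ℝ) (hφ : φ ≠ 0)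
    (h : ∀ z : ℂ, (φ.map (algebraMap ℝ ℂ)).eval z = 0 → z.re < 0) :
    0 < φ.eval 0 * φ.leadingCoeff := by
  have hlead : φ.leadingCoeff ≠ 0 := leadingCoeff_ne_zero.2 hφ
  have hnoroot : ∀ t : ℝ, 0 ≤ t → φ.eval t ≠ 0 := by
    intro t ht h0
    have := h (t:ℂ) (by rw [eval_map_real, h0]; simp)
    rw [Complex.ofReal_re] at this; linarith
  rcases le_or_gt φ.degree 0 with hdeg | hdeg
  · have hC := Polynomial.eq_C_of_degree_le_zero hdeg
    have hc0 : φ.coeff 0 ≠ 0 := by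
      intro h0; apply hφ; rw [hC, h0, map_zero]
    rw [hC]; simp [Polynomial.leadingCoeff_C]
    first
      | exact hc0
      | exact mul_self_pos.2 hc0
  · set ψ := Polynomial.C φ.leadingCoeff * φ with hψdef
    have hψeval : ∀ t : ℝ, ψ.eval t = φ.leadingCoeff * φ.eval t := by
      intro t; rw [hψdef]; simp
    have hψdeg : 0 < ψ.degree := by
      rw [hψdef, Polynomial.degree_C_mul hlead]; exact hdeg
    have hψlead : ψ.leadingCoeff = φ.leadingCoeff^2 := by
      rw [hψdef, Polynomial.leadingCoeff_mul, Polynomial.leadingCoeff_C]; ring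
    have htt : Tendsto (fun x => ψ.eval x) atTop atTop :=
      Polynomial.tendsto_atTop_of_leadingCoeff_nonneg ψ hψdeg (by rw [hψlead]; positivity)
    obtain ⟨T, hT⟩ := ((htt.eventually_ge_atTop 1).and (eventually_ge_atTop 0)).exists
    have hψ0ne : ψ.eval 0 ≠ 0 := by
      rw [hψeval 0]; exact mul_ne_zero hlead (hnoroot 0 le_rfl)
    have hψ0pos : 0 < ψ.eval 0 := by
      by_contra hcon
      push_neg at hcon
      have hψ0 : ψ.eval 0 < 0 := lt_of_le_of_ne hcon hψ0ne
      have h0mem : (0:ℝ) ∈ Icc (ψ.eval 0) (ψ.eval T) := ⟨le_of_lt hψ0, by linarith [hT.1]⟩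
      obtain ⟨t, ht, hft⟩ := intermediate_value_Icc hT.2 (Polynomial.continuous ψ).continuousOn h0mem
      have : φ.eval t = 0 := by
        have h2 : φ.leadingCoeff * φ.eval t = 0 := by rw [← hψeval t]; exact hft
        rcases mul_eq_zero.1 h2 with h' | h'
        · exact absurd h' hlead
        · exact h'
      exact hnoroot t ht.1 this
    rw [mul_comm]
    rw [hψeval 0] at hψ0pos
    exact hψ0pos

lemma cubic_real_root (p q ℓ : ℝ) : ∃ r : ℝ, r^3 + p*r^2 + q*r + ℓ = 0 := by
  set f := fun x : ℝ => x^3 + p*x^2 + q*x + ℓ with hf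
  have hcont : Continuous f := by fun_prop
  set M := 1 + |p| + |q| + |ℓ| with hM
  have hM1 : 1 ≤ M := by
    have := abs_nonneg p; have := abs_nonneg q; have := abs_nonneg ℓ; linarith
  have habsp := le_abs_self p; have habsq := le_abs_self q; have habsl := le_abs_self ℓ
  have habsp' := neg_abs_le p; have habsq' := neg_abs_le q; have habsl' := neg_abs_le ℓ
  have hfM : 0 < f M := by
    rw [hf]; simp only
    nlinarith [sq_nonneg M, mul_pos (lt_of_lt_of_le one_pos hM1) (lt_of_lt_of_le one_pos hM1)]
  have hfmM : f (-M) < 0 := by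
    rw [hf]; simp only
    nlinarith [sq_nonneg M, mul_pos (lt_of_lt_of_le one_pos hM1) (lt_of_lt_of_le one_pos hM1)]
  have h0mem : (0:ℝ) ∈ Set.Icc (f (-M)) (f M) := ⟨le_of_lt hfmM, le_of_lt hfM⟩
  obtain ⟨r, _, hr⟩ := intermediate_value_Icc (by linarith : -M ≤ M) hcont.continuousOn h0mem
  exact ⟨r, hr⟩

lemma odd_three_ifs (r u v : ℝ) (hr : r ≠ 0) (hu : u ≠ 0) (hv : v ≠ 0) :
    Odd ((if 0 < r then 1 else 0) + ((if 0 < u then 1 else 0) + (if 0 < v then 1 else 0)) : ℕ)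
      ↔ 0 < r*u*v := by
  rcases hr.lt_or_gt with h|h <;> rcases hu.lt_or_gt with h'|h' <;> rcases hv.lt_or_gt with h''|h''
  · have hprod : r*u*v < 0 := mul_neg_of_pos_of_neg (mul_pos_of_neg_of_neg h h') h''
    simp [not_lt.2 h.le, not_lt.2 h'.le, not_lt.2 h''.le, asymm hprod]
  · have hprod : 0 < r*u*v := mul_pos (mul_pos_of_neg_of_neg h h') h''
    simp [not_lt.2 h.le, not_lt.2 h'.le, h'', hprod]
  · have hprod : 0 < r*u*v := mul_pos_of_neg_of_neg (mul_neg_of_neg_of_pos h h') h''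
    simp [not_lt.2 h.le, h', not_lt.2 h''.le, hprod]
  · have hprod : r*u*v < 0 := mul_neg_of_neg_of_pos (mul_neg_of_neg_of_pos h h') h''
    simp [not_lt.2 h.le, h', h'', asymm hprod]
    try decide
  · have hprod : 0 < r*u*v := mul_pos_of_neg_of_neg (mul_neg_of_pos_of_neg h h') h''
    simp [h, not_lt.2 h'.le, not_lt.2 h''.le, hprod]
  · have hprod : r*u*v < 0 := mul_neg_of_neg_of_pos (mul_neg_of_pos_of_neg h h') h''
    simp [h, not_lt.2 h'.le, h'', asymm hprod]
    try decide
  · have hprod : r*u*v < 0 := mul_neg_of_pos_of_neg (mul_pos h h') h''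
    simp [h, h', not_lt.2 h''.le, asymm hprod]
    try decide
  · have hprod : 0 < r*u*v := mul_pos (mul_pos h h') h''
    simp [h, h', h'', hprod]
    try decide

lemma denom3_factor (p q ℓ r : ℝ) (hroot : r^3 + p*r^2 + q*r + ℓ = 0) :
    denom3 p q ℓ = (X - C r) * (X^2 + C (p+r) * X + C (r^2+p*r+q)) := by
  have hl : ℓ = -(r*(r^2+p*r+q)) := by linear_combination hroot
  rw [denom3, hl]
  simp only [C_add, C_mul, C_neg, C_pow]
  ring

lemma quad_roots (β γ : ℝ) : ∃ z1 z2 : ℂ, z1 + z2 = -(β:ℂ) ∧ z1*z2 = (γ:ℂ) ∧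
    ((∃ u v : ℝ, z1 = (u:ℂ) ∧ z2 = (v:ℂ)) ∨ (z1.re = -β/2 ∧ z2.re = -β/2 ∧ 0 < γ)) := by
  rcases le_or_gt 0 (β^2 - 4*γ) with hD|hD
  · set s := Real.sqrt (β^2 - 4*γ) with hsdef
    have hs2 : s^2 = β^2 - 4*γ := Real.sq_sqrt hD
    have hs2' : ((s:ℂ))^2 = (β:ℂ)^2 - 4*(γ:ℂ) := by exact_mod_cast congrArg (Complex.ofReal) hs2
    refine ⟨(((-β + s)/2 : ℝ) : ℂ), (((-β - s)/2 : ℝ) : ℂ), ?_, ?_, Or.inl ⟨_, _, rfl, rfl⟩⟩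
    · push_cast; ring
    · push_cast; linear_combination (-1/4 : ℂ) * hs2'

  · set s := Real.sqrt (4*γ - β^2) with hsdef
    have hs2 : s^2 = 4*γ - β^2 := Real.sq_sqrt (by linarith)
    refine ⟨⟨-β/2, s/2⟩, ⟨-β/2, -(s/2)⟩, ?_, ?_, Or.inr ⟨rfl, rfl, by nlinarith [sq_nonneg β]⟩⟩
    · rw [Complex.ext_iff]
      constructor <;> simp [Complex.add_re, Complex.add_im] <;> ring
    · rw [Complex.ext_iff]
      constructor
      · simp [Complex.mul_re, Complex.mul_im]
        nlinarith [hs2]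
      · simp [Complex.mul_re, Complex.mul_im]
        ring

lemma odd_orhp_iff (p q ℓ : ℝ) (hl : ℓ ≠ 0) : Odd (orhpCount (denom3 p q ℓ)) ↔ ℓ < 0 := by
  obtain ⟨r, hr⟩ := cubic_real_root p q ℓ
  set γ := r^2 + p*r + q with hγdef
  have hfac := denom3_factor p q ℓ r hr
  rw [← hγdef] at hfac
  have hlval : ℓ = -(r*γ) := by rw [hγdef]; linear_combination hr
  have hrne : r ≠ 0 := fun h => hl (by rw [hlval, h]; ring)
  have hγne : γ ≠ 0 := fun h => hl (by rw [hlval, h]; ring)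
  obtain ⟨z1, z2, hsum, hprod, hcase⟩ := quad_roots (p + r) γ
  have hquadfac : (X^2 + C ((p+r:ℝ):ℂ) * X + C ((γ:ℝ):ℂ)) = (X - C z1) * (X - C z2) := by
    have hexp : (X - C z1) * (X - C z2) = X^2 - C (z1 + z2)*X + C (z1*z2) := by
      simp only [C_add, C_mul]; ring
    rw [hexp, hsum, hprod]
    simp only [C_neg]
    ring
  have hmap : (denom3 p q ℓ).map (algebraMap ℝ ℂ) = (X - C ((r:ℝ):ℂ)) * ((X - C z1) * (X - C z2)) := by
    rw [hfac]
    simp only [Polynomial.map_mul, Polynomial.map_sub, Polynomial.map_add, Polynomial.map_pow,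
      Polynomial.map_X, Polynomial.map_C, Complex.coe_algebraMap]
    rw [hquadfac]
  have hroots : ((denom3 p q ℓ).map (algebraMap ℝ ℂ)).roots = {((r:ℝ):ℂ)} + ({z1} + {z2}) := by
    rw [hmap, Polynomial.roots_mul, Polynomial.roots_mul, roots_X_sub_C, roots_X_sub_C, roots_X_sub_C]
    · exact mul_ne_zero (X_sub_C_ne_zero z1) (X_sub_C_ne_zero z2)
    · exact mul_ne_zero (X_sub_C_ne_zero _) (mul_ne_zero (X_sub_C_ne_zero z1) (X_sub_C_ne_zero z2))
  have hcount : orhpCount (denom3 p q ℓ) =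
      (if 0 < r then 1 else 0) + ((if 0 < z1.re then 1 else 0) + (if 0 < z2.re then 1 else 0)) := by
    rw [orhpCount, hroots]
    simp only [Multiset.singleton_add, Multiset.filter_cons, Multiset.filter_singleton,
      Complex.ofReal_re, apply_ite Multiset.card, Multiset.card_singleton, Multiset.card_zero,
      Multiset.card_add, Multiset.empty_eq_zero]
  rw [hcount]
  rcases hcase with ⟨u, v, hu, hv⟩ | ⟨hre1, hre2, hγpos⟩
  · have huv : u * v = γ := by
      have : ((u*v : ℝ) : ℂ) = ((γ:ℝ):ℂ) := by push_cast; rw [← hu, ← hv]; exact hprod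
      exact_mod_cast this
    have hune : u ≠ 0 := fun h => hγne (by rw [← huv, h]; ring)
    have hvne : v ≠ 0 := fun h => hγne (by rw [← huv, h]; ring)
    rw [hu, hv, Complex.ofReal_re, Complex.ofReal_re]
    rw [odd_three_ifs r u v hrne hune hvne]
    rw [mul_assoc, huv]
    constructor <;> intro h <;> nlinarith [hlval]
  · rw [hre1, hre2]
    have : ∀ t : ℕ, Odd ((if 0 < r then 1 else 0) + (t + t)) ↔ Odd ((if 0 < r then 1 else 0) : ℕ) := by
      intro t; simp [Nat.odd_iff]; omega
    rw [this]
    rcases hrne.lt_or_gt with h | h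
    · simp [not_lt.2 h.le]
      nlinarith [hlval, hγpos]
    · simp [h]
      nlinarith [hlval, hγpos]

lemma chp_eq (ζ k p q ℓ : ℝ) (hk : k ≠ 0) :
    denom3 p q ℓ - C (-ℓ/k) * numer3 ζ k = X * (X^2 + C p * X + C (q + ζ*ℓ/k)) := by
  have h1 : -ℓ/k * k = -ℓ := by field_simp
  have e1 : C (-ℓ/k) * C k = -C ℓ := by rw [← C_mul, h1, C_neg]
  have e2 : C (q + ζ*ℓ/k) = C q - C (-ℓ/k) * C ζ := by
    rw [← C_mul, ← C_sub]
    congr 1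
    field_simp
    ring
  rw [denom3, numer3, e2]
  linear_combination e1

lemma quadC_monic (p c : ℝ) : (X^2 + C (p:ℂ) * X + C (c:ℂ)).Monic := by
  have : (X^2 + C (p:ℂ) * X + C (c:ℂ)) = X^2 + (C (p:ℂ) * X + C (c:ℂ)) := by ring
  rw [this]
  apply monic_X_pow_add
  apply lt_of_le_of_lt (Polynomial.degree_add_le _ _)
  apply max_lt
  · refine lt_of_le_of_lt (Polynomial.degree_mul_le _ _) ?_
    refine lt_of_le_of_lt (add_le_add Polynomial.degree_C_le Polynomial.degree_X_le) ?_
    norm_num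
  · exact lt_of_le_of_lt (Polynomial.degree_C_le) (by norm_num)

lemma rm_zero_X : Polynomial.rootMultiplicity (0:ℂ) (X : Polynomial ℂ) = 1 := by
  have := Polynomial.rootMultiplicity_X_sub_C_self (R := ℂ) (x := 0)
  simpa using this

lemma omegaStable_cubic_iff (p c : ℝ) :
    OmegaStable (X * (X^2 + C p * X + C c)) 0 ↔ (0 < p ∧ 0 < c) := by
  have hmap : ((X * (X^2 + C p * X + C c)).map (algebraMap ℝ ℂ)) =
      X * (X^2 + C (p:ℂ) * X + C (c:ℂ)) := by
    simp only [Polynomial.map_mul, Polynomial.map_add, Polynomial.map_pow, Polynomial.map_X,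
      Polynomial.map_C, Complex.coe_algebraMap]
  set Q : Polynomial ℂ := X^2 + C (p:ℂ) * X + C (c:ℂ) with hQ
  have hQne : Q ≠ 0 := (quadC_monic p c).ne_zero
  have hXQ : (X : Polynomial ℂ) * Q ≠ 0 := mul_ne_zero Polynomial.X_ne_zero hQne
  have hQeval : ∀ z : ℂ, Q.eval z = z^2 + (p:ℂ)*z + (c:ℂ) := by
    intro z; rw [hQ]; simp
  have hpt : ((0:ℝ):ℂ) * Complex.I = 0 := by simp
  constructor
  · rintro ⟨h1, -, h3⟩
    rw [hmap, hpt] at h1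
    rw [Polynomial.rootMultiplicity_mul hXQ, rm_zero_X] at h1
    have hc : c ≠ 0 := by
      intro hc0
      have : Q.IsRoot 0 := by rw [Polynomial.IsRoot, hQeval]; simp [hc0]
      have := (Polynomial.rootMultiplicity_pos hQne).2 this
      omega
    apply quad_params p c hc
    intro z hz hzne
    apply h3 z _ (by rw [hpt]; exact hzne) (by rw [hpt, neg_zero]; exact hzne)
    rw [hmap]
    simp only [Polynomial.eval_mul, Polynomial.eval_X]
    rw [hQeval, hz, mul_zero]
  · rintro ⟨hp, hc⟩
    refine ⟨?_, fun h => absurd rfl h, ?_⟩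
    · rw [hmap, hpt, Polynomial.rootMultiplicity_mul hXQ, rm_zero_X]
      have : Polynomial.rootMultiplicity (0:ℂ) Q = 0 := by
        apply Polynomial.rootMultiplicity_eq_zero
        rw [Polynomial.IsRoot, hQeval]
        simpa using hc.ne'
      omega
    · intro z hz hzne _
      rw [hmap] at hz
      simp only [Polynomial.eval_mul, Polynomial.eval_X, mul_eq_zero] at hz
      rcases hz with h0 | h0
      · exact absurd h0 (by rw [hpt] at hzne; exact hzne)
      · rw [hQeval] at h0
        exact quad_stable p c hp hc z h0

lemma poly_eval_upper (f : Polynomial ℝ) (m : ℕ) (hm : f.natDegree ≤ m) (z : ℂ)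
    (hz : 1 ≤ ‖z‖) :
    ‖(f.map (algebraMap ℝ ℂ)).eval z‖
      ≤ (∑ j ∈ Finset.range (m+1), |f.coeff j|) * ‖z‖ ^ m := by
  have hdeg : (f.map (algebraMap ℝ ℂ)).natDegree < m + 1 :=
    lt_of_le_of_lt (le_trans Polynomial.natDegree_map_le hm) (by omega)
  rw [Polynomial.eval_eq_sum_range' hdeg]
  refine le_trans (norm_sum_le _ _) ?_
  rw [Finset.sum_mul]
  apply Finset.sum_le_sum
  intro j hj
  rw [Finset.mem_range] at hj
  rw [norm_mul, norm_pow, Polynomial.coeff_map, Complex.coe_algebraMap, Complex.norm_real,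
    Real.norm_eq_abs]
  exact mul_le_mul_of_nonneg_left (pow_le_pow_right₀ hz (by omega)) (abs_nonneg _)

lemma poly_eval_lower (a : Polynomial ℝ) (m : ℕ) (hm : a.natDegree = m) (hm1 : 1 ≤ m) (z : ℂ)
    (hz : 1 ≤ ‖z‖)
    (hz2 : 2 * (∑ j ∈ Finset.range m, |a.coeff j|) / |a.leadingCoeff| ≤ ‖z‖)
    (ha : a ≠ 0) :
    |a.leadingCoeff| / 2 * ‖z‖ ^ m ≤ ‖(a.map (algebraMap ℝ ℂ)).eval z‖ := by
  set la := |a.leadingCoeff| with hla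
  have hla0 : 0 < la := abs_pos.2 (Polynomial.leadingCoeff_ne_zero.2 ha)
  set S := ∑ j ∈ Finset.range m, |a.coeff j| with hS
  have hS0 : 0 ≤ S := Finset.sum_nonneg fun _ _ => abs_nonneg _
  have hdeg : (a.map (algebraMap ℝ ℂ)).natDegree < m + 1 :=
    lt_of_le_of_lt (le_trans Polynomial.natDegree_map_le hm.le) (by omega)
  rw [Polynomial.eval_eq_sum_range' hdeg, Finset.sum_range_succ]
  have hlead : ‖(a.map (algebraMap ℝ ℂ)).coeff m * z ^ m‖ = la * ‖z‖^m := by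
    rw [norm_mul, norm_pow, Polynomial.coeff_map, Complex.coe_algebraMap, Complex.norm_real,
      Real.norm_eq_abs, ← hm, ← Polynomial.leadingCoeff]
  have htail : ‖∑ j ∈ Finset.range m, (a.map (algebraMap ℝ ℂ)).coeff j * z ^ j‖
      ≤ S * ‖z‖^(m-1) := by
    refine le_trans (norm_sum_le _ _) ?_
    rw [hS, Finset.sum_mul]
    apply Finset.sum_le_sum
    intro j hj
    rw [Finset.mem_range] at hj
    rw [norm_mul, norm_pow, Polynomial.coeff_map, Complex.coe_algebraMap, Complex.norm_real,
      Real.norm_eq_abs]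
    exact mul_le_mul_of_nonneg_left (pow_le_pow_right₀ hz (by omega)) (abs_nonneg _)
  have h1 : la * ‖z‖^m - S * ‖z‖^(m-1) ≤ ‖∑ j ∈ Finset.range m, (a.map (algebraMap ℝ ℂ)).coeff j * z ^ j + (a.map (algebraMap ℝ ℂ)).coeff m * z ^ m‖ := by
    have hd := norm_sub_le ((∑ j ∈ Finset.range m, (a.map (algebraMap ℝ ℂ)).coeff j * z ^ j) + (a.map (algebraMap ℝ ℂ)).coeff m * z ^ m) (∑ j ∈ Finset.range m, (a.map (algebraMap ℝ ℂ)).coeff j * z ^ j)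
    simp only [add_sub_cancel_left] at hd
    rw [hlead] at hd
    linarith
  refine le_trans ?_ h1
  -- la/2 * ‖z‖^m ≤ la‖z‖^m - S‖z‖^(m-1)  ⟸  S‖z‖^(m-1) ≤ la/2 ‖z‖^m
  have hzpos : (0:ℝ) < ‖z‖ := lt_of_lt_of_le one_pos hz
  have hpow : ‖z‖^m = ‖z‖^(m-1) * ‖z‖ := by
    rw [← pow_succ]
    congr 1
    omega
  have h2 : 2*S ≤ ‖z‖ * la := (div_le_iff₀ hla0).1 hz2
  have h3 : 0 ≤ ‖z‖^(m-1) := pow_nonneg (norm_nonneg z) _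
  have hkey : S * ‖z‖^(m-1) ≤ la/2 * ‖z‖^m := by
    calc S * ‖z‖^(m-1) ≤ (la/2*‖z‖) * ‖z‖^(m-1) := by nlinarith
      _ = la/2 * ‖z‖^m := by rw [hpow]; ring
  linarith

lemma stableRat_no_imag_root (a : Polynomial ℝ) (hst : StableRat a) (ω : ℝ) :
    (a.map (algebraMap ℝ ℂ)).eval ((ω:ℂ) * Complex.I) ≠ 0 := by
  intro h
  have := hst _ h
  simp [Complex.mul_re] at this

lemma hinf_bdd (b a : Polynomial ℝ) (ha : a ≠ 0) (hdeg : b.degree ≤ a.degree)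
    (hst : StableRat a) :
    BddAbove (Set.range fun ω : ℝ => ‖ratEval b a (ω * Complex.I)‖) := by
  set f := fun ω : ℝ => ‖ratEval b a (ω * Complex.I)‖ with hf
  have hno := stableRat_no_imag_root a hst
  have hcont : Continuous f := by
    apply continuous_norm.comp
    apply Continuous.div
    · exact (Polynomial.continuous _).comp (Complex.continuous_ofReal.mul continuous_const)
    · exact (Polynomial.continuous _).comp (Complex.continuous_ofReal.mul continuous_const)
    · intro ω; exact hno ω
  rcases le_or_gt a.degree 0 with hd0 | hd0
  · -- constant case
    have hb : b = C (b.coeff 0) := Polynomial.eq_C_of_degree_le_zero (le_trans hdeg hd0)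
    have haC : a = C (a.coeff 0) := Polynomial.eq_C_of_degree_le_zero hd0
    refine ⟨f 0, ?_⟩
    rintro x ⟨ω, rfl⟩
    have : ∀ ω' : ℝ, f ω' = f 0 := by
      intro ω'
      rw [hf]
      simp only [ratEval]
      conv_lhs => rw [hb, haC]
      conv_rhs => rw [hb, haC]
      simp
    exact (this ω).le
  · have hm1 : 1 ≤ a.natDegree := by
      rwa [← Polynomial.natDegree_pos_iff_degree_pos, Nat.lt_iff_add_one_le, zero_add] at hd0
    set m := a.natDegree with hmdef
    have hbm : b.natDegree ≤ m := Polynomial.natDegree_le_natDegree hdeg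
    set Sb := ∑ j ∈ Finset.range (m+1), |b.coeff j| with hSb
    set Sa := ∑ j ∈ Finset.range m, |a.coeff j| with hSa
    set la := |a.leadingCoeff| with hla
    have hla0 : 0 < la := abs_pos.2 (Polynomial.leadingCoeff_ne_zero.2 ha)
    have hSb0 : 0 ≤ Sb := Finset.sum_nonneg fun _ _ => abs_nonneg _
    set R := max 1 (2*Sa/la) with hR
    have houter : ∀ ω : ℝ, R ≤ |ω| → f ω ≤ 2*Sb/la := by
      intro ω hω
      have habs : ‖(ω:ℂ) * Complex.I‖ = |ω| := by
        rw [norm_mul, Complex.norm_real, Complex.norm_I, mul_one, Real.norm_eq_abs]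
      have h1 : 1 ≤ ‖(ω:ℂ) * Complex.I‖ := by
        rw [habs]; exact le_trans (le_max_left _ _) hω
      have h2 : 2*Sa/la ≤ ‖(ω:ℂ) * Complex.I‖ := by
        rw [habs]; exact le_trans (le_max_right _ _) hω
      have hub := poly_eval_upper b m hbm _ h1
      have hlb := poly_eval_lower a m rfl hm1 _ h1 (by rw [mul_comm 2 Sa] at h2 ⊢; exact h2) ha
      have hposden : 0 < la/2 * ‖(ω:ℂ)*Complex.I‖ ^ m := by
        apply mul_pos (by linarith)
        exact pow_pos (lt_of_lt_of_le one_pos h1) m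
      rw [hf]
      simp only [ratEval, norm_div]
      calc ‖(b.map (algebraMap ℝ ℂ)).eval ((ω:ℂ)*Complex.I)‖ /
              ‖(a.map (algebraMap ℝ ℂ)).eval ((ω:ℂ)*Complex.I)‖
          ≤ (Sb * ‖(ω:ℂ)*Complex.I‖ ^ m) / (la/2 * ‖(ω:ℂ)*Complex.I‖ ^ m) := by
            apply div_le_div₀ (by positivity) hub hposden hlb
        _ = 2*Sb/la := by
            rw [div_eq_div_iff (by positivity) (by positivity)]
            ring
    obtain ⟨C0, hC0⟩ := (isCompact_Icc (a := -R) (b := R)).image hcont |>.bddAbove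
    refine ⟨max C0 (2*Sb/la), ?_⟩
    rintro x ⟨ω, rfl⟩
    rcases le_or_gt |ω| R with hcase | hcase
    · refine le_trans ?_ (le_max_left _ _)
      apply hC0
      exact ⟨ω, abs_le.1 hcase, rfl⟩
    · exact le_trans (houter ω hcase.le) (le_max_right _ _)

lemma hinf_ge_at_zero (b a : Polynomial ℝ) (ha : a ≠ 0) (hdeg : b.degree ≤ a.degree)
    (hst : StableRat a) :
    |b.eval 0 / a.eval 0| ≤ hinfNorm b a := by
  have hb := le_ciSup (hinf_bdd b a ha hdeg hst) 0
  have hval : ‖ratEval b a (((0:ℝ):ℂ) * Complex.I)‖ = |b.eval 0 / a.eval 0| := by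
    rw [ratEval]
    rw [show ((0:ℝ):ℂ) * Complex.I = (((0:ℝ)):ℂ) by simp, eval_map_real, eval_map_real,
      ← Complex.ofReal_div, Complex.norm_real, Real.norm_eq_abs]
  rw [hinfNorm]
  rw [hval] at hb
  exact hb

lemma denom3_monic (p q ℓ : ℝ) : (denom3 p q ℓ).Monic := by
  have h : denom3 p q ℓ = X^3 + (C p * X^2 + C q * X + C ℓ) := by rw [denom3]; ring
  rw [h]
  apply monic_X_pow_add
  refine lt_of_le_of_lt (Polynomial.degree_add_le _ _) (max_lt (lt_of_le_of_lt (Polynomial.degree_add_le _ _) (max_lt ?_ ?_)) ?_)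
  · refine lt_of_le_of_lt (Polynomial.degree_mul_le _ _) ?_
    refine lt_of_le_of_lt (add_le_add Polynomial.degree_C_le (Polynomial.degree_pow_le_of_le 2 Polynomial.degree_X_le)) ?_
    norm_num
  · refine lt_of_le_of_lt (Polynomial.degree_mul_le _ _) ?_
    refine lt_of_le_of_lt (add_le_add Polynomial.degree_C_le Polynomial.degree_X_le) ?_
    norm_num
  · exact lt_of_le_of_lt Polynomial.degree_C_le (by norm_num)

lemma denom3_degree (p q ℓ : ℝ) : (denom3 p q ℓ).degree = 3 := by
  have h : denom3 p q ℓ = X^3 + (C p * X^2 + C q * X + C ℓ) := by rw [denom3]; ring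
  rw [h]
  rw [Polynomial.degree_add_eq_left_of_degree_lt]
  · exact Polynomial.degree_X_pow 3
  · rw [Polynomial.degree_X_pow]
    refine lt_of_le_of_lt (Polynomial.degree_add_le _ _) (max_lt (lt_of_le_of_lt (Polynomial.degree_add_le _ _) (max_lt ?_ ?_)) ?_)
    · refine lt_of_le_of_lt (Polynomial.degree_mul_le _ _) ?_
      refine lt_of_le_of_lt (add_le_add Polynomial.degree_C_le (Polynomial.degree_pow_le_of_le 2 Polynomial.degree_X_le)) ?_
      norm_num
    · refine lt_of_le_of_lt (Polynomial.degree_mul_le _ _) ?_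
      refine lt_of_le_of_lt (add_le_add Polynomial.degree_C_le Polynomial.degree_X_le) ?_
      norm_num
    · exact lt_of_le_of_lt Polynomial.degree_C_le (by norm_num)

lemma numer3_degree_le (ζ k : ℝ) : (numer3 ζ k).degree ≤ 1 := by
  rw [numer3]
  refine le_trans (Polynomial.degree_sub_le _ _) (max_le ?_ ?_)
  · refine le_trans (Polynomial.degree_mul_le _ _) ?_
    refine le_trans (add_le_add Polynomial.degree_C_le Polynomial.degree_X_le) ?_
    norm_num
  · exact le_trans Polynomial.degree_C_le (by norm_num)

lemma lower_bound (ζ k p q ℓ : ℝ) (hk : k ≠ 0) (hl : ℓ < 0) (b a : Polynomial ℝ)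
    (hstab : Stabilizes b a (numer3 ζ k) (denom3 p q ℓ)) :
    |ℓ/k| ≤ hinfNorm b a := by
  obtain ⟨ha, -, hdeg, hst, hroots⟩ := hstab
  set d := denom3 p q ℓ with hd
  set n := numer3 ζ k with hn
  set φ := a * d - b * n with hφdef
  -- degree facts
  have hddeg : d.degree = 3 := denom3_degree p q ℓ
  have hdlead : d.leadingCoeff = 1 := denom3_monic p q ℓ
  have hadlt : (b*n).degree < (a*d).degree := by
    rw [Polynomial.degree_mul, Polynomial.degree_mul, hddeg]
    refine lt_of_le_of_lt (add_le_add hdeg (numer3_degree_le ζ k)) ?_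
    rw [Polynomial.degree_eq_natDegree ha]
    exact_mod_cast by omega
  have hφlead : φ.leadingCoeff = a.leadingCoeff := by
    have h1 : φ = -(b*n) + a*d := by rw [hφdef]; ring
    rw [h1, Polynomial.leadingCoeff_add_of_degree_lt (by rwa [Polynomial.degree_neg]),
      Polynomial.leadingCoeff_mul, hdlead, mul_one]
  have halead : a.leadingCoeff ≠ 0 := Polynomial.leadingCoeff_ne_zero.2 ha
  have hφne : φ ≠ 0 := fun h => halead (by rw [← hφlead, h, Polynomial.leadingCoeff_zero])
  have hφ0 : φ.eval 0 = a.eval 0 * ℓ + b.eval 0 * k := by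
    rw [hφdef]
    simp only [Polynomial.eval_sub, Polynomial.eval_mul]
    rw [hd, hn, denom3, numer3]
    simp
  have hsign1 := stable_sign φ hφne hroots
  have hsign2 := stable_sign a ha hst
  rw [hφ0, hφlead] at hsign1
  set a0 := a.eval 0 with ha0
  set b0 := b.eval 0 with hb0
  have ha0ne : a0 ≠ 0 := by
    intro h
    rw [h, zero_mul] at hsign2
    exact lt_irrefl 0 hsign2
  have hkey : 0 < (a0*ℓ + b0*k) * a0 := by
    nlinarith [mul_pos hsign1 hsign2, sq_nonneg a.leadingCoeff, mul_self_nonneg a.leadingCoeff]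
  set e := b0 / a0 with he
  have hek : |ℓ| < e*k := by
    have hexp : (a0*ℓ + b0*k) * a0 = a0^2 * (ℓ + e*k) := by
      rw [he]; field_simp
    rw [hexp] at hkey
    have : 0 < ℓ + e*k := by
      rcases lt_or_ge 0 (ℓ + e*k) with h | h
      · exact h
      · nlinarith [sq_nonneg a0]
    rw [abs_of_neg hl]
    linarith
  have heabs : |ℓ|/|k| < |e| := by
    have h5 : e*k ≤ |e| * |k| := by
      calc e*k ≤ |e*k| := le_abs_self _
        _ = |e| * |k| := abs_mul e k
    have hkpos : 0 < |k| := abs_pos.2 hk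
    rw [div_lt_iff₀ hkpos]
    linarith
  calc |ℓ/k| = |ℓ|/|k| := abs_div ℓ k
    _ ≤ |e| := heabs.le
    _ = |b.eval 0 / a.eval 0| := by rw [he]
    _ ≤ hinfNorm b a := hinf_ge_at_zero b a ha hdeg hst

lemma const_chp (ζ k p q ℓ t : ℝ) :
    (1:Polynomial ℝ) * denom3 p q ℓ - C t * numer3 ζ k
      = X^3 + C p * X^2 + C (q - t*ζ) * X + C (ℓ + t*k) := by
  rw [denom3, numer3]
  simp only [one_mul, C_sub, C_add, C_mul]
  ring

lemma const_stabilizes (ζ k p q ℓ : ℝ) (hk : k ≠ 0) (hp : 0 < p) (hl : ℓ < 0)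
    (hc : 0 < q + ζ*ℓ/k) (η : ℝ) (hη : 0 < η)
    (hηs : η * (|ℓ| + |p*(ζ*ℓ/k)| + 1) < p*(q + ζ*ℓ/k)) :
    Stabilizes (C (-ℓ/k*(1+η))) 1 (numer3 ζ k) (denom3 p q ℓ) := by
  set t := -ℓ/k*(1+η) with ht
  have hc0val : ℓ + t*k = -ℓ*η := by rw [ht]; field_simp; ring
  have hc1val : q - t*ζ = (q + ζ*ℓ/k) + η*(ζ*ℓ/k) := by rw [ht]; field_simp; ring
  have hc0pos : 0 < ℓ + t*k := by rw [hc0val]; nlinarith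
  have hrh : ℓ + t*k < p * (q - t*ζ) := by
    rw [hc0val, hc1val]
    have h1 := abs_of_neg hl
    have h2 := neg_abs_le (p*(ζ*ℓ/k))
    have h3 := le_abs_self (p*(ζ*ℓ/k))
    nlinarith
  refine ⟨one_ne_zero, isCoprime_one_right, ?_, ?_, ?_⟩
  · rw [Polynomial.degree_one]; exact Polynomial.degree_C_le
  · intro z h
    rw [Polynomial.map_one, Polynomial.eval_one] at h
    exact absurd h one_ne_zero
  · intro z hz
    rw [const_chp] at hz
    simp only [Polynomial.map_add, Polynomial.map_mul, Polynomial.map_pow, Polynomial.map_X,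
      Polynomial.map_C, Complex.coe_algebraMap, Polynomial.eval_add, Polynomial.eval_mul,
      Polynomial.eval_pow, Polynomial.eval_X, Polynomial.eval_C] at hz
    exact cubic_stable p (q - t*ζ) (ℓ + t*k) hp hc0pos hrh z hz

lemma hinf_const (t : ℝ) : hinfNorm (C t) 1 = |t| := by
  rw [hinfNorm]
  have h : ∀ ω:ℝ, ‖ratEval (C t) 1 (ω*Complex.I)‖ = |t| := by
    intro ω
    rw [ratEval]
    simp [Polynomial.map_one, Polynomial.map_C, Complex.coe_algebraMap, Complex.norm_real]
  simp_rw [h]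
  exact ciSup_const

lemma rir_eq (ζ k p q ℓ : ℝ) (hk : k ≠ 0) (hp : 0 < p) (hl : ℓ < 0)
    (hc : 0 < q + ζ*ℓ/k) :
    RIR (numer3 ζ k) (denom3 p q ℓ) = ENNReal.ofReal |ℓ/k| := by
  apply le_antisymm
  · apply ENNReal.le_of_forall_pos_le_add
    intro ε hε _
    have hεr : (0:ℝ) < ε := hε
    set c := q + ζ*ℓ/k with hcdef
    set K := |ℓ| + |p*(ζ*ℓ/k)| + 1 with hK
    have hK0 : 0 < K := by positivity
    set η := min (p*c/(2*K)) ((ε:ℝ)/(|ℓ/k|+1)) with hη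
    have hη0 : 0 < η := lt_min (by positivity) (by positivity)
    have hηs : η * K < p*c := by
      have h1 : η ≤ p*c/(2*K) := min_le_left _ _
      have h2 : p*c/(2*K)*K = p*c/2 := by field_simp
      have h3 := mul_le_mul_of_nonneg_right h1 hK0.le
      rw [h2] at h3
      have h4 : 0 < p * c := mul_pos hp hc
      calc η * K ≤ p*c/2 := h3
        _ < p*c := half_lt_self h4
    have hmem := const_stabilizes ζ k p q ℓ hk hp hl hc η hη0 (by rw [← hK, ← hcdef]; exact hηs)
    have hle : RIR (numer3 ζ k) (denom3 p q ℓ)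
        ≤ ENNReal.ofReal (hinfNorm (C (-ℓ/k*(1+η))) 1) :=
      sInf_le ⟨C (-ℓ/k*(1+η)), 1, hmem, rfl⟩
    rw [hinf_const] at hle
    refine le_trans hle ?_
    have htval : |(-ℓ/k*(1+η))| = |ℓ/k| * (1+η) := by
      rw [abs_mul]
      congr 1
      · rw [neg_div, abs_neg]
      · exact abs_of_pos (by linarith)
    rw [htval]
    have hfin : |ℓ/k| * (1+η) ≤ |ℓ/k| + (ε:ℝ) := by
      have h2 : η ≤ (ε:ℝ)/(|ℓ/k|+1) := min_le_right _ _
      have h3 : (0:ℝ) ≤ |ℓ/k| := abs_nonneg _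
      have h4 : (ε:ℝ)/(|ℓ/k|+1)*(|ℓ/k|+1) = (ε:ℝ) := div_mul_cancel₀ _ (by positivity)
      nlinarith
    calc ENNReal.ofReal (|ℓ/k| * (1+η)) ≤ ENNReal.ofReal (|ℓ/k| + (ε:ℝ)) :=
          ENNReal.ofReal_le_ofReal hfin
      _ = ENNReal.ofReal |ℓ/k| + ENNReal.ofReal (ε:ℝ) :=
          ENNReal.ofReal_add (abs_nonneg _) ε.coe_nonneg
      _ = ENNReal.ofReal |ℓ/k| + ↑ε := by rw [ENNReal.ofReal_coe_nnreal]
  · apply le_sInf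
    rintro r ⟨b, a, hstab, rfl⟩
    exact ENNReal.ofReal_le_ofReal (lower_bound ζ k p q ℓ hk hl b a hstab)

/-- for `g(s) = (ζs − k)/(s³ + ps² + qs + ℓ)` with `k ≠ 0`, `ℓ ≠ 0`:
(A) odd number of ORHP poles and the constant perturbation `δ₀ = 1/g(0) = −ℓ/k`
yields a characteristic polynomial with a simple root at `0` and all other roots
in the OLHP, iff (B) `p > 0`, `ℓ < 0`, `q + ζℓ/k > 0`; and under (B),
`ρ*(g) = 1/|g(0)| = |ℓ/k|`. -/
theorem stmt7 (ζ k p q ℓ : ℝ) (hk : k ≠ 0) (hℓ : ℓ ≠ 0)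
    (hcop : IsCoprime (numer3 ζ k) (denom3 p q ℓ)) :
    ((Odd (orhpCount (denom3 p q ℓ)) ∧
        OmegaStable (denom3 p q ℓ - Polynomial.C (-ℓ / k) * numer3 ζ k) 0)
      ↔ (0 < p ∧ ℓ < 0 ∧ 0 < q + ζ * ℓ / k)) ∧
    ((0 < p ∧ ℓ < 0 ∧ 0 < q + ζ * ℓ / k) →
      RIR (numer3 ζ k) (denom3 p q ℓ) = ENNReal.ofReal |ℓ / k|) := by
  constructor
  · constructor
    · rintro ⟨hodd, hos⟩
      have hlneg := (odd_orhp_iff p q ℓ hℓ).1 hodd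
      rw [chp_eq ζ k p q ℓ hk] at hos
      obtain ⟨hp', hc'⟩ := (omegaStable_cubic_iff p (q + ζ*ℓ/k)).1 hos
      exact ⟨hp', hlneg, hc'⟩
    · rintro ⟨hp', hl', hc'⟩
      refine ⟨(odd_orhp_iff p q ℓ hℓ).2 hl', ?_⟩
      rw [chp_eq ζ k p q ℓ hk]
      exact (omegaStable_cubic_iff p (q + ζ*ℓ/k)).2 ⟨hp', hc'⟩
  · rintro ⟨hp', hl', hc'⟩
    exact rir_eq ζ k p q ℓ hk hp' hl' hc'
end

section
/- Let p > 0, ℓ > 0, and q be real numbers. The real cubic polynomial s³ + ps² + qs + ℓ has exactly two roots (counted with multiplicity) with positive real part and no roots on the imaginary axis if and only if ℓ > pq. -/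
open Polynomial

lemma cubicRealCase (p q ℓ r x u : ℝ) (hp : 0 < p) (hℓ : 0 < ℓ)
    (hpr : p = -(r+x+u)) (hqr : q = r*x+(r*u+x*u)) (hlr : ℓ = -(r*(x*u))) :
    (((if 0 < r then 1 else 0) + ((if 0 < x then 1 else 0) + (if 0 < u then 1 else 0)) : ℕ) = 2
      ↔ p*q < ℓ) := by
  have key : ℓ - p*q = (r+x)*((r+u)*(x+u)) := by rw [hpr, hqr, hlr]; ring
  have hprod : r*(x*u) < 0 := by linarith
  have hr0 : r ≠ 0 := by intro h; rw [h] at hprod; simp at hprod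
  have hx0 : x ≠ 0 := by intro h; rw [h] at hprod; simp at hprod
  have hu0 : u ≠ 0 := by intro h; rw [h] at hprod; simp at hprod
  rcases hr0.lt_or_gt with hr|hr <;> rcases hx0.lt_or_gt with hx|hx <;>
    rcases hu0.lt_or_gt with hu|hu
  · have h1 : 0 < (r+u)*(x+u) := mul_pos_of_neg_of_neg (by linarith) (by linarith)
    have h2 : (r+x)*((r+u)*(x+u)) < 0 := mul_neg_of_neg_of_pos (by linarith) h1
    rw [if_neg (by linarith), if_neg (by linarith), if_neg (by linarith)]
    constructor
    · intro h; simp at h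
    · intro h; exfalso; linarith
  · exfalso
    have := mul_pos_of_neg_of_neg hr (mul_neg_of_neg_of_pos hx hu)
    linarith
  · exfalso
    have := mul_pos_of_neg_of_neg hr (mul_neg_of_pos_of_neg hx hu)
    linarith
  · have h1 : (r+u)*(x+u) < 0 := mul_neg_of_neg_of_pos (by linarith) (by linarith)
    have h2 : 0 < (r+x)*((r+u)*(x+u)) := mul_pos_of_neg_of_neg (by linarith) h1
    rw [if_neg (by linarith), if_pos (by linarith), if_pos (by linarith)]
    constructor
    · intro _; linarith
    · intro _; norm_num
  · exfalso
    have := mul_pos hr (mul_pos_of_neg_of_neg hx hu)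
    linarith
  · have h1 : (r+u)*(x+u) < 0 := mul_neg_of_pos_of_neg (by linarith) (by linarith)
    have h2 : 0 < (r+x)*((r+u)*(x+u)) := mul_pos_of_neg_of_neg (by linarith) h1
    rw [if_pos (by linarith), if_neg (by linarith), if_pos (by linarith)]
    constructor
    · intro _; linarith
    · intro _; norm_num
  · have h1 : 0 < (r+u)*(x+u) := mul_pos_of_neg_of_neg (by linarith) (by linarith)
    have h2 : 0 < (r+x)*((r+u)*(x+u)) := mul_pos (by linarith) h1
    rw [if_pos (by linarith), if_pos (by linarith), if_neg (by linarith)]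
    constructor
    · intro _; linarith
    · intro _; norm_num
  · exfalso
    have := mul_pos hr (mul_pos hx hu)
    linarith

/-- for `p > 0`, `ℓ > 0`, the cubic `s³ + ps² + qs + ℓ` has exactly two
roots (with multiplicity) in the ORHP and none on the imaginary axis iff `ℓ > pq`. -/
theorem stmt9 (p q ℓ : ℝ) (hp : 0 < p) (hℓ : 0 < ℓ) :
    (orhpCount (denom3 p q ℓ) = 2 ∧
      ∀ z : ℂ, ((denom3 p q ℓ).map (algebraMap ℝ ℂ)).eval z = 0 → z.re ≠ 0)
    ↔ p * q < ℓ := by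
  obtain ⟨r, hr⟩ : ∃ r : ℝ, r^3 + p*r^2 + q*r + ℓ = 0 := by
    set t : ℝ := 1 + p + |q| + ℓ with ht
    have ht1 : 1 ≤ t := by
      have := abs_nonneg q; simp [ht]; linarith
    have hcont : Continuous fun x : ℝ => x^3 + p*x^2 + q*x + ℓ := by fun_prop
    have hneg : (-t)^3 + p*(-t)^2 + q*(-t) + ℓ ≤ 0 := by
      have h1 : q ≤ |q| := le_abs_self q
      have h2 : -|q| ≤ q := neg_abs_le q
      nlinarith [sq_nonneg t, mul_le_mul_of_nonneg_left ht1 (le_of_lt hℓ), sq_nonneg (t-1),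
        mul_pos hℓ (mul_pos (lt_of_lt_of_le one_pos ht1) (lt_of_lt_of_le one_pos ht1))]
    have hle : -t ≤ (0:ℝ) := by linarith
    have h0 : (0:ℝ) ∈ Set.Icc ((-t)^3 + p*(-t)^2 + q*(-t) + ℓ)
        ((0:ℝ)^3 + p*0^2 + q*0 + ℓ) := by
      constructor <;> simp <;> linarith
    obtain ⟨r, _, hrr⟩ := intermediate_value_Icc hle hcont.continuousOn h0
    exact ⟨r, hrr⟩
  obtain ⟨b, hb⟩ : ∃ b : ℂ, b^2 + ((p:ℂ)+r)*b + ((r:ℂ)^2 + p*r + q) = 0 := by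
    obtain ⟨s, hs⟩ : ∃ s : ℂ, s^2 = ((p:ℂ)+r)^2 - 4*((r:ℂ)^2 + p*r + q) := by
      obtain ⟨s, hs⟩ := Complex.isAlgClosed.exists_root
        (p := X^2 - C (((p:ℂ)+r)^2 - 4*((r:ℂ)^2 + p*r + q)))
        (by rw [Polynomial.degree_X_pow_sub_C (by norm_num)]; norm_num)
      refine ⟨s, ?_⟩
      have := hs; simp [IsRoot, sub_eq_zero] at this; exact this
    exact ⟨(-((p:ℂ)+r) + s)/2, by field_simp; linear_combination hs⟩
  set c : ℂ := -((p:ℂ)+r) - b with hc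
  have hrC : (r:ℂ)^3 + (p:ℂ)*(r:ℂ)^2 + (q:ℂ)*(r:ℂ) + (ℓ:ℂ) = 0 := by
    exact_mod_cast congrArg (Complex.ofReal) hr
  have hp' : (p:ℂ) = -((r:ℂ) + b + c) := by rw [hc]; ring
  have hq' : (q:ℂ) = (r:ℂ)*b + ((r:ℂ)*c + b*c) := by rw [hc]; linear_combination hb
  have hl' : (ℓ:ℂ) = -((r:ℂ)*(b*c)) := by
    rw [hc]; linear_combination hrC - (r:ℂ)*hb
  have hfact : (denom3 p q ℓ).map (algebraMap ℝ ℂ)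
      = (X - C (r:ℂ)) * ((X - C b) * (X - C c)) := by
    have hF : (denom3 p q ℓ).map (algebraMap ℝ ℂ)
        = X^3 + C ((p:ℂ)) * X^2 + C ((q:ℂ)) * X + C ((ℓ:ℂ)) := by
      simp [denom3, Polynomial.map_add, Polynomial.map_mul, Polynomial.map_pow]
    rw [hF, hp', hq', hl']
    simp only [map_neg, map_add, map_mul]
    ring
  have hroots : ((denom3 p q ℓ).map (algebraMap ℝ ℂ)).roots = {(r:ℂ), b, c} := by
    rw [hfact, Polynomial.roots_mul (mul_ne_zero (X_sub_C_ne_zero _)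
        (mul_ne_zero (X_sub_C_ne_zero b) (X_sub_C_ne_zero c))),
      Polynomial.roots_mul (mul_ne_zero (X_sub_C_ne_zero b) (X_sub_C_ne_zero c)),
      roots_X_sub_C, roots_X_sub_C, roots_X_sub_C]
    rfl
  have hcnt : orhpCount (denom3 p q ℓ) =
      (if 0 < r then 1 else 0) + ((if 0 < b.re then 1 else 0) + (if 0 < c.re then 1 else 0)) := by
    rw [orhpCount, hroots]
    simp only [Multiset.insert_eq_cons, Multiset.filter_cons, Multiset.filter_singleton,
      Complex.ofReal_re]
    split_ifs <;> simp
  have hmem : ∀ z : ℂ, ((denom3 p q ℓ).map (algebraMap ℝ ℂ)).eval z = 0 →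
      z = (r:ℂ) ∨ z = b ∨ z = c := by
    intro z hz
    rw [hfact] at hz
    simp only [eval_mul, eval_sub, eval_X, eval_C, mul_eq_zero, sub_eq_zero] at hz
    tauto
  by_cases hy : b.im = 0
  · -- all roots real
    have hbx : b = ((b.re : ℝ) : ℂ) := Complex.ext rfl (by simp [hy])
    have hcu : c = ((c.re : ℝ) : ℂ) := by
      refine Complex.ext rfl ?_
      simp [hc, hy]
    rw [hbx, hcu] at hp' hq' hl'
    have hpr : p = -(r+b.re+c.re) := by exact_mod_cast hp'
    have hqr : q = r*b.re+(r*c.re+b.re*c.re) := by exact_mod_cast hq'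
    have hlr : ℓ = -(r*(b.re*c.re)) := by exact_mod_cast hl'
    have hiff := cubicRealCase p q ℓ r b.re c.re hp hℓ hpr hqr hlr
    have hprod : r*(b.re*c.re) < 0 := by linarith
    have hr0 : r ≠ 0 := by intro h; rw [h] at hprod; simp at hprod
    have hx0 : b.re ≠ 0 := by intro h; rw [h] at hprod; simp at hprod
    have hu0 : c.re ≠ 0 := by intro h; rw [h] at hprod; simp at hprod
    constructor
    · rintro ⟨h2, -⟩
      rw [hcnt] at h2
      exact hiff.mp h2
    · intro hlt
      refine ⟨by rw [hcnt]; exact hiff.mpr hlt, ?_⟩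
      intro z hz
      rcases hmem z hz with h|h|h <;> rw [h]
      · simpa using hr0
      · exact hx0
      · exact hu0
  · -- conjugate pair case
    have hbC : b*b + (((p+r : ℝ)):ℂ)*b + (((r^2+p*r+q : ℝ)):ℂ) = 0 := by
      push_cast; linear_combination hb
    have h1 := congrArg Complex.re hbC
    have h2 := congrArg Complex.im hbC
    simp only [Complex.add_re, Complex.mul_re, Complex.ofReal_re, Complex.ofReal_im,
      Complex.add_im, Complex.mul_im, Complex.zero_re, Complex.zero_im] at h1 h2
    have hpr2 : p + r = -(2*b.re) := by
      have h3 : b.im * (2*b.re + (p+r)) = 0 := by linear_combination h2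
      rcases mul_eq_zero.mp h3 with h|h
      · exact absurd h hy
      · linarith
    have hgam : r^2+p*r+q = b.re^2 + b.im^2 := by linear_combination h1 - b.re*hpr2
    have hcre : c.re = b.re := by
      rw [hc]
      simp only [Complex.sub_re, Complex.neg_re, Complex.add_re, Complex.ofReal_re]
      linarith
    have hcim : c.im = -b.im := by
      rw [hc]
      simp
    have hlr : ℓ = -(r*(b.re^2+b.im^2)) := by
      have hbc : b * c = ((b.re^2 + b.im^2 : ℝ) : ℂ) := by
        apply Complex.ext
        · simp only [Complex.mul_re, hcre, hcim, Complex.ofReal_re]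
          ring
        · simp only [Complex.mul_im, hcre, hcim, Complex.ofReal_im]
          ring
      rw [hbc] at hl'
      exact_mod_cast hl'
    have hy2 : 0 < b.im^2 := by rcases lt_or_gt_of_ne hy with h|h <;> nlinarith
    have hrneg : r < 0 := by nlinarith [sq_nonneg b.re]
    have hp2 : p = -(r+2*b.re) := by linarith
    have hq2 : q = b.re^2 + b.im^2 + 2*b.re*r := by linear_combination hgam - r*hpr2
    have key : ℓ - p*q = 2*(b.re*((r+b.re)^2 + b.im^2)) := by rw [hlr, hp2, hq2]; ring
    have hpos : 0 < (r+b.re)^2 + b.im^2 := by nlinarith [sq_nonneg (r+b.re)]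
    constructor
    · rintro ⟨h2, -⟩
      rw [hcnt, if_neg (by linarith : ¬ (0:ℝ) < r), hcre] at h2
      have hxpos : 0 < b.re := by
        by_contra hxn
        rw [if_neg hxn] at h2
        simp at h2
      linarith [mul_pos hxpos hpos]
    · intro hlt
      have hxpos : 0 < b.re := by nlinarith [hpos]
      refine ⟨?_, ?_⟩
      · rw [hcnt, if_neg (by linarith : ¬ (0:ℝ) < r), hcre, if_pos hxpos]
      · intro z hz
        rcases hmem z hz with h|h|h <;> rw [h]
        · simpa using hrneg.ne
        · exact hxpos.ne'
        · rw [hcre]; exact hxpos.ne'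
end
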